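/- arXiv:1012.2176 — 7 statements merged into one kernel-verified Lean document; each statement's English description precedes it below -/
import Mathlib

section
/- Assume moreover that Tor₁^R(S, S) = 0. Then the R-linear map θ : S ⊗_R S' → Hom_R(S, S/R) determined by s ⊗ f ↦ (t ↦ f(π(t·s))) is bijective, and it sends 1 ⊗ id_{S/R} to the canonical projection π : S → S/R. -/
open CategoryTheory TensorProduct

universe u

/-- Key elementary lemma: if `0 → A → B → C → 0` is exact, `q : F → C` is a surjection from
a projective module whose kernel inclusion stays injective after tensoring with `M`, then
`A → B` stays injective after tensoring with `M`. -/
lemma aux_L {R : Type u} [CommRing R] (M : Type u) [AddCommGroup M] [Module R M]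
    {A B C F : Type u} [AddCommGroup A] [AddCommGroup B] [AddCommGroup C] [AddCommGroup F]
    [Module R A] [Module R B] [Module R C] [Module R F] [Module.Projective R F]
    (f : A →ₗ[R] B) (g : B →ₗ[R] C) (hf : Function.Injective f) (hfg : Function.Exact f g)
    (hg : Function.Surjective g) (q : F →ₗ[R] C) (hq : Function.Surjective q)
    (hker : Function.Injective (LinearMap.lTensor M (LinearMap.ker q).subtype)) :
    Function.Injective (LinearMap.lTensor M f) := by
  obtain ⟨σ, hσ⟩ := Module.projective_lifting_property g q hg
  set B' : Submodule R (B × F) :=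
    LinearMap.ker (g.comp (LinearMap.fst R B F) - q.comp (LinearMap.snd R B F)) with hB'
  have memB' : ∀ x : B × F, x ∈ B' ↔ g x.1 = q x.2 := by
    intro x
    simp [hB', LinearMap.mem_ker, sub_eq_zero]
  set p : B' →ₗ[R] B := (LinearMap.fst R B F).comp B'.subtype with hp
  set pF : B' →ₗ[R] F := (LinearMap.snd R B F).comp B'.subtype with hpF
  set j : A →ₗ[R] B' := LinearMap.codRestrict B' ((LinearMap.inl R B F).comp f)
    (fun a => by simp [memB', hfg.apply_apply_eq_zero]) with hj
  set ι : (LinearMap.ker q) →ₗ[R] B' := LinearMap.codRestrict B'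
    ((LinearMap.inr R B F).comp (LinearMap.ker q).subtype)
    (fun n => by simp [memB']) with hι
  -- the retraction ρ
  have hτmem : ∀ y : B', (p - σ.comp pF) y ∈ LinearMap.range f := by
    intro y
    rw [← hfg.linearMap_ker_eq, LinearMap.mem_ker]
    have : g (p y) = q (pF y) := (memB' _).mp y.2
    simp only [LinearMap.sub_apply, map_sub, LinearMap.comp_apply, this]
    rw [← LinearMap.comp_apply g σ, hσ]
    simp
  set ρ : B' →ₗ[R] A := (LinearEquiv.ofInjective f hf).symm.toLinearMap.comp
    (LinearMap.codRestrict (LinearMap.range f) (p - σ.comp pF) hτmem) with hρ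
  have hρj : ρ.comp j = LinearMap.id := by
    ext a
    have : f ((ρ.comp j) a) = f a := by
      have h1 : ((LinearMap.codRestrict (LinearMap.range f) (p - σ.comp pF) hτmem) (j a) :
          B) = f a := by
        simp [hp, hpF, hj]
        show f a - σ 0 = f a
        simp
      have := congrArg (fun z : LinearMap.range f => (z : B))
        ((LinearEquiv.ofInjective f hf).apply_symm_apply
          ((LinearMap.codRestrict (LinearMap.range f) (p - σ.comp pF) hτmem) (j a)))
      simpa [h1, hρ] using this
    exact hf this
  have hpj : p.comp j = f := by ext a; simp [hp, hj]; rfl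
  have hpFj : pF.comp j = 0 := by ext a; simp [hpF, hj]; rfl
  have hpFι : pF.comp ι = (LinearMap.ker q).subtype := by ext n; simp [hpF, hι]; rfl
  have hexact : Function.Exact ι p := by
    intro y
    constructor
    · intro hy
      refine ⟨⟨(y : B × F).2, ?_⟩, ?_⟩
      · have := (memB' _).mp y.2
        rw [LinearMap.mem_ker, ← this]
        simpa [hp] using congrArg g hy
      · apply Subtype.ext
        have : (y : B × F).1 = 0 := hy
        simp [hι]
        exact Subtype.ext (Prod.ext this.symm rfl)
    · rintro ⟨n, rfl⟩
      simp [hp, hι]; rfl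
  have hpsurj : Function.Surjective p := by
    intro b
    obtain ⟨x, hx⟩ := hq (g b)
    exact ⟨⟨(b, x), (memB' _).mpr hx.symm⟩, rfl⟩
  -- the chase
  rw [← LinearMap.ker_eq_bot, LinearMap.ker_eq_bot']
  intro y hy
  have hx' : LinearMap.lTensor M p (LinearMap.lTensor M j y) = 0 := by
    rw [← LinearMap.lTensor_comp_apply, hpj, hy]
  obtain ⟨z, hz⟩ := (lTensor_exact M hexact hpsurj _).mp hx'
  have hz0 : z = 0 := by
    apply hker
    rw [← hpFι, LinearMap.lTensor_comp_apply, hz, ← LinearMap.lTensor_comp_apply, hpFj]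
    simp
  have h5 : LinearMap.lTensor M j y = 0 := by rw [← hz, hz0, map_zero]
  have h6 := congrArg (LinearMap.lTensor M ρ) h5
  rw [← LinearMap.lTensor_comp_apply, hρj, map_zero] at h6
  simpa using h6

section Epi

variable {R S : Type u} [CommRing R] [CommRing S] [Algebra R S]

lemma epi_tmul (hepi : ∀ (T : Type u) [Ring T] (g₁ g₂ : S →+* T),
      g₁.comp (algebraMap R S) = g₂.comp (algebraMap R S) → g₁ = g₂) (u v : S) :
    (u ⊗ₜ[R] v : S ⊗[R] S) = (u * v) ⊗ₜ[R] 1 := by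
  have h := hepi (S ⊗[R] S) (Algebra.TensorProduct.includeLeftRingHom)
    (Algebra.TensorProduct.includeRight.toRingHom) ?_
  · have h1 : ∀ w : S, (w ⊗ₜ[R] (1 : S) : S ⊗[R] S) = 1 ⊗ₜ[R] w := fun w => by
      have := congrArg (fun φ : S →+* S ⊗[R] S => φ w) h
      simpa using this
    calc u ⊗ₜ[R] v = (u ⊗ₜ[R] (1 : S)) * ((1 : S) ⊗ₜ[R] v) := by
          rw [Algebra.TensorProduct.tmul_mul_tmul, mul_one, one_mul]
      _ = ((1 : S) ⊗ₜ[R] u) * ((1 : S) ⊗ₜ[R] v) := by rw [h1]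
      _ = (1 : S) ⊗ₜ[R] (u * v) := by
          rw [Algebra.TensorProduct.tmul_mul_tmul, mul_one]
      _ = (u * v) ⊗ₜ[R] 1 := (h1 _).symm
  · ext r
    show (algebraMap R S r) ⊗ₜ[R] (1 : S) = (1 : S) ⊗ₜ[R] (algebraMap R S r)
    rw [Algebra.algebraMap_eq_smul_one, smul_tmul]

lemma lam_lTensor_inj :
    Function.Injective (LinearMap.lTensor S (Algebra.linearMap R S)) := by
  have hcomp : (LinearMap.mul' R S).comp (LinearMap.lTensor S (Algebra.linearMap R S))
      = (TensorProduct.rid R S).toLinearMap := by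
    apply TensorProduct.ext'
    intro s r
    simp [Algebra.smul_def, mul_comm]
  intro x y hxy
  have := congrArg (LinearMap.mul' R S) hxy
  rw [← LinearMap.comp_apply, ← LinearMap.comp_apply, hcomp] at this
  exact (TensorProduct.rid R S).injective this

lemma tor_extract
    (htor : Limits.IsZero
      (((Tor (ModuleCat.{u} R) 1).obj (ModuleCat.of R S)).obj (ModuleCat.of R S))) :
    ∃ (F : Type u) (_ : AddCommGroup F) (_ : Module R F) (_ : Module.Projective R F)
      (q : F →ₗ[R] S), Function.Surjective q ∧
      Function.Injective (LinearMap.lTensor S (LinearMap.ker q).subtype) := by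
  have hP : HasProjectiveResolution (ModuleCat.of R S) := HasProjectiveResolutions.out _
  let P : ProjectiveResolution (ModuleCat.of R S) := hP.out.some
  haveI := P.projective 0
  haveI := P.projective 1
  let q : ↑(P.complex.X 0) →ₗ[R] S := (P.π.f 0).hom
  have hqsurj : Function.Surjective q := by
    have : Epi (P.π.f 0) := inferInstance
    exact (ModuleCat.epi_iff_surjective (P.π.f 0)).mp this
  have hexact : Function.Exact ((P.complex.d 1 0).hom : ↑(P.complex.X 1) →ₗ[R] ↑(P.complex.X 0)) q := by
    have h := P.exact₀
    rw [ShortComplex.moduleCat_exact_iff_range_eq_ker] at h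
    intro y
    have h' := SetLike.ext_iff.mp h y
    constructor
    · intro hy
      obtain ⟨x, hx⟩ := h'.mpr hy
      exact ⟨x, hx⟩
    · rintro ⟨x, rfl⟩
      exact h'.mp ⟨x, rfl⟩
  -- tensored exactness at 1 from htor
  let Fn := (MonoidalCategory.tensoringLeft (ModuleCat.{u} R)).obj (ModuleCat.of R S)
  have htor' : Limits.IsZero ((Fn.leftDerived 1).obj (ModuleCat.of R S)) := htor
  have h1 := htor'.of_iso (P.isoLeftDerivedObj Fn 1).symm
  have h2 : ((Fn.mapHomologicalComplex _).obj P.complex).ExactAt 1 :=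
    (HomologicalComplex.exactAt_iff_isZero_homology _ _).mpr h1
  have h3 := (HomologicalComplex.exactAt_iff' _ 2 1 0 (by simp) (by simp)).mp h2
  rw [ShortComplex.moduleCat_exact_iff] at h3
  have h4 : ∀ (x : S ⊗[R] ↑(P.complex.X 1)),
      LinearMap.lTensor S ((P.complex.d 1 0).hom : ↑(P.complex.X 1) →ₗ[R] ↑(P.complex.X 0)) x = 0 →
      ∃ y : S ⊗[R] ↑(P.complex.X 2),
        LinearMap.lTensor S ((P.complex.d 2 1).hom : ↑(P.complex.X 2) →ₗ[R] ↑(P.complex.X 1)) y = x :=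
    fun x hx => h3 x hx
  -- conclude
  refine ⟨↑(P.complex.X 0), inferInstance, inferInstance,
    (IsProjective.iff_projective ↑(P.complex.X 0)).mpr (P.projective 0), q, hqsurj, ?_⟩
  set N := LinearMap.ker q with hN
  have hmem : ∀ x, P.complex.d 1 0 x ∈ N := fun x => hexact.apply_apply_eq_zero x
  set d10' : ↑(P.complex.X 1) →ₗ[R] N :=
    LinearMap.codRestrict N (P.complex.d 1 0).hom hmem with hd10'
  have hsub : N.subtype.comp d10' = ((P.complex.d 1 0).hom : _ →ₗ[R] _) := rfl
  have hd10'_surj : Function.Surjective d10' := by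
    rintro ⟨n, hn⟩
    obtain ⟨x, hx⟩ := (hexact n).mp hn
    exact ⟨x, Subtype.ext hx⟩
  rw [← LinearMap.ker_eq_bot, LinearMap.ker_eq_bot']
  intro z hz
  obtain ⟨w, rfl⟩ := LinearMap.lTensor_surjective S hd10'_surj z
  have hw : LinearMap.lTensor S ((P.complex.d 1 0).hom : _ →ₗ[R] _) w = 0 := by
    rw [← hsub, LinearMap.lTensor_comp, LinearMap.comp_apply, hz]
  obtain ⟨v, hv⟩ := h4 w hw
  have hdd : d10'.comp ((P.complex.d 2 1).hom : ↑(P.complex.X 2) →ₗ[R] ↑(P.complex.X 1)) = 0 := by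
    apply LinearMap.ext
    intro x
    apply Subtype.ext
    show (P.complex.d 1 0) ((P.complex.d 2 1) x) = 0
    have := P.complex.d_comp_d 2 1 0
    exact LinearMap.ext_iff.mp (congrArg ModuleCat.Hom.hom this) x
  rw [← hv, ← LinearMap.lTensor_comp_apply, hdd]
  simp

end Epi

set_option maxHeartbeats 2000000 in
set_option synthInstance.maxHeartbeats 1000000 in
/-- Let `λ = algebraMap R S` be an injective ring epimorphism between commutative rings with
`Tor₁^R(S, S) = 0`.  Write `S/R` for the quotient `R`-module `S ⧸ λ(R)` with projection `π`,
and `S' = End_R(S/R)`.  Then the `R`-linear map `θ : S ⊗_R S' → Hom_R(S, S/R)` determined by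
`s ⊗ f ↦ (t ↦ f (π (t * s)))` is bijective and sends `1 ⊗ id` to `π`. -/
theorem stmt_3 {R S : Type u} [CommRing R] [CommRing S] [Algebra R S]
    (hinj : Function.Injective (algebraMap R S))
    (hepi : ∀ (T : Type u) [Ring T] (g₁ g₂ : S →+* T),
      g₁.comp (algebraMap R S) = g₂.comp (algebraMap R S) → g₁ = g₂)
    (htor : Limits.IsZero
      (((Tor (ModuleCat.{u} R) 1).obj (ModuleCat.of R S)).obj (ModuleCat.of R S))) :
    ∃ θ : (S ⊗[R] Module.End R (S ⧸ LinearMap.range (Algebra.linearMap R S))) →ₗ[R]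
        (S →ₗ[R] (S ⧸ LinearMap.range (Algebra.linearMap R S))),
      (∀ (s : S) (f : Module.End R (S ⧸ LinearMap.range (Algebra.linearMap R S))) (t : S),
          θ (s ⊗ₜ[R] f) t = f ((LinearMap.range (Algebra.linearMap R S)).mkQ (t * s))) ∧
      Function.Bijective θ ∧
      θ ((1 : S) ⊗ₜ[R]
          (LinearMap.id : Module.End R (S ⧸ LinearMap.range (Algebra.linearMap R S))))
        = (LinearMap.range (Algebra.linearMap R S)).mkQ := by
  classical
  set Λ : Submodule R S := LinearMap.range (Algebra.linearMap R S) with hΛ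
  -- the action map `act : S ⊗ Hom(S, S/R) → Hom(S, S/R)`
  let bil : S →ₗ[R] (S →ₗ[R] S ⧸ Λ) →ₗ[R] (S →ₗ[R] S ⧸ Λ) := LinearMap.mk₂ R
    (fun u g => g.comp (LinearMap.mulRight R u))
    (fun u₁ u₂ g => by ext t; simp [mul_add])
    (fun c u g => by ext t; simp [mul_smul_comm])
    (fun u g₁ g₂ => by ext t; simp)
    (fun c u g => by ext t; simp)
  let act : (S ⊗[R] (S →ₗ[R] S ⧸ Λ)) →ₗ[R] (S →ₗ[R] S ⧸ Λ) := TensorProduct.lift bil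
  have act_tmul : ∀ (u : S) (g : S →ₗ[R] S ⧸ Λ) (t : S), act (u ⊗ₜ[R] g) t = g (t * u) :=
    fun u g t => rfl
  have mulRight_one : LinearMap.mulRight R (1 : S) = LinearMap.id := by ext t; simp
  have act_one : ∀ g : S →ₗ[R] S ⧸ Λ, act ((1 : S) ⊗ₜ[R] g) = g := by
    intro g; ext t; rw [act_tmul, mul_one]
  have hretract : ∀ w : S ⊗[R] (S →ₗ[R] S ⧸ Λ), (1 : S) ⊗ₜ[R] (act w) = w := by
    intro w
    induction w using TensorProduct.induction_on with
    | zero => simp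
    | add x y hx hy => rw [map_add, tmul_add, hx, hy]
    | tmul u g =>
      let Φ : (S ⊗[R] S) →ₗ[R] S ⊗[R] (S →ₗ[R] S ⧸ Λ) := TensorProduct.lift (LinearMap.mk₂ R
        (fun a b => a ⊗ₜ[R] (g.comp (LinearMap.mulRight R b)))
        (fun a₁ a₂ b => by rw [add_tmul])
        (fun c a b => by rw [smul_tmul'])
        (fun a b₁ b₂ => by
          rw [← tmul_add]
          congr 1
          ext t
          simp [mul_add])
        (fun c a b => by
          rw [← tmul_smul]
          congr 1
          ext t
          simp [mul_smul_comm]))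
      have key : (u ⊗ₜ[R] (1 : S) : S ⊗[R] S) = (1 : S) ⊗ₜ[R] u := by
        have h := epi_tmul hepi 1 u
        rw [one_mul] at h
        exact h.symm
      have h1 : Φ (u ⊗ₜ[R] (1 : S)) = u ⊗ₜ[R] g := by
        show u ⊗ₜ[R] (g.comp (LinearMap.mulRight R (1 : S))) = _
        rw [mulRight_one, LinearMap.comp_id]
      calc (1 : S) ⊗ₜ[R] (act (u ⊗ₜ[R] g)) = Φ ((1 : S) ⊗ₜ[R] u) := rfl
        _ = Φ (u ⊗ₜ[R] 1) := by rw [key]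
        _ = u ⊗ₜ[R] g := h1
  have act_bij : Function.Bijective act := by
    constructor
    · intro x y h
      rw [← hretract x, ← hretract y, h]
    · intro g
      exact ⟨(1 : S) ⊗ₜ[R] g, act_one g⟩
  -- the maps `πstar` and `ev1` and their exactness
  let πstar : (Module.End R (S ⧸ Λ)) →ₗ[R] (S →ₗ[R] S ⧸ Λ) :=
    { toFun := fun f => (f : (S ⧸ Λ) →ₗ[R] S ⧸ Λ).comp Λ.mkQ
      map_add' := fun f₁ f₂ => by ext s; rfl
      map_smul' := fun c f => by ext s; rfl }
  let ev1 : (S →ₗ[R] S ⧸ Λ) →ₗ[R] S ⧸ Λ :=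
    { toFun := fun g => g 1
      map_add' := fun _ _ => rfl
      map_smul' := fun _ _ => rfl }
  have hone : Λ.mkQ (1 : S) = 0 := by
    rw [Submodule.mkQ_apply, Submodule.Quotient.mk_eq_zero]
    exact ⟨1, by simp⟩
  have hπ_inj : Function.Injective πstar := by
    intro f₁ f₂ h
    ext k
    exact LinearMap.ext_iff.mp h k
  have hexact_πev : Function.Exact πstar ev1 := by
    intro g
    constructor
    · intro hg
      have hg' : g 1 = 0 := hg
      have hle : Λ ≤ LinearMap.ker g := by
        rintro x ⟨r, rfl⟩
        rw [LinearMap.mem_ker]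
        show g (Algebra.linearMap R S r) = 0
        rw [Algebra.linearMap_apply, Algebra.algebraMap_eq_smul_one, map_smul, hg', smul_zero]
      refine ⟨Λ.liftQ g hle, ?_⟩
      show (Λ.liftQ g hle).comp Λ.mkQ = g
      exact Λ.liftQ_mkQ g hle
    · rintro ⟨f, rfl⟩
      show ((f : (S ⧸ Λ) →ₗ[R] S ⧸ Λ).comp Λ.mkQ) 1 = 0
      rw [LinearMap.comp_apply, hone, map_zero]
  have hev_surj : Function.Surjective ev1 := by
    intro k
    obtain ⟨u, rfl⟩ := Λ.mkQ_surjective k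
    refine ⟨Λ.mkQ.comp (LinearMap.mulRight R u), ?_⟩
    show Λ.mkQ (1 * u) = Λ.mkQ u
    rw [one_mul]
  -- `S ⊗ (S/R) = 0`
  have hK0 : ∀ x : S ⊗[R] (S ⧸ Λ), x = 0 := by
    intro x
    induction x using TensorProduct.induction_on with
    | zero => rfl
    | add a b ha hb => rw [ha, hb, add_zero]
    | tmul u k =>
      obtain ⟨s, rfl⟩ := Λ.mkQ_surjective k
      have h : u ⊗ₜ[R] Λ.mkQ s = LinearMap.lTensor S Λ.mkQ (u ⊗ₜ[R] s) := rfl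
      rw [h, epi_tmul hepi u s, LinearMap.lTensor_tmul, hone, tmul_zero]
  -- surjectivity of `lTensor S πstar`
  have hsurj_lt : Function.Surjective (LinearMap.lTensor S πstar) := by
    intro y
    obtain ⟨x, hx⟩ := (lTensor_exact S hexact_πev hev_surj y).mp (hK0 _)
    exact ⟨x, hx⟩
  -- injectivity of `lTensor S πstar`
  obtain ⟨F, hFa, hFm, hFp, q, hq_surj, hS⟩ := tor_extract htor
  let qK : F →ₗ[R] S ⧸ Λ := Λ.mkQ.comp q
  have hqK_surj : Function.Surjective qK := by
    intro k
    obtain ⟨s, rfl⟩ := Λ.mkQ_surjective k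
    obtain ⟨x, rfl⟩ := hq_surj s
    exact ⟨x, rfl⟩
  set NK := LinearMap.ker qK with hNK
  set B' : Submodule R (S × F) :=
    LinearMap.ker ((Λ.mkQ.comp (LinearMap.fst R S F)) - qK.comp (LinearMap.snd R S F)) with hB'
  have memB' : ∀ x : S × F, x ∈ B' ↔ Λ.mkQ x.1 = qK x.2 := by
    intro x
    simp [hB', LinearMap.mem_ker, sub_eq_zero]
  set p' : B' →ₗ[R] S := (LinearMap.fst R S F).comp B'.subtype with hp'
  set snd' : B' →ₗ[R] F := (LinearMap.snd R S F).comp B'.subtype with hsnd'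
  set ι' : NK →ₗ[R] B' := LinearMap.codRestrict B' ((LinearMap.inr R S F).comp NK.subtype)
    (fun n => by simp [memB']) with hι'
  have hι'_inj : Function.Injective ι' := by
    intro a b h
    apply Subtype.ext
    exact congrArg (fun y : B' => (y : S × F).2) h
  have hexact_ιp : Function.Exact ι' p' := by
    intro y
    constructor
    · intro hy
      refine ⟨⟨(y : S × F).2, ?_⟩, ?_⟩
      · have := (memB' _).mp y.2
        rw [LinearMap.mem_ker, ← this]
        simpa [hp'] using congrArg Λ.mkQ hy
      · apply Subtype.ext
        have hy1 : (y : S × F).1 = 0 := hy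
        simp [hι']
        exact Subtype.ext (Prod.ext hy1.symm rfl)
    · rintro ⟨n, rfl⟩
      simp [hp', hι']; rfl
  have hp'_surj : Function.Surjective p' := by
    intro s
    obtain ⟨x, hx⟩ := hqK_surj (Λ.mkQ s)
    exact ⟨⟨(s, x), (memB' _).mpr hx.symm⟩, rfl⟩
  have hint : Function.Injective (LinearMap.lTensor S ι') :=
    aux_L S ι' p' hι'_inj hexact_ιp hp'_surj q hq_surj hS
  set jR : R →ₗ[R] B' := LinearMap.codRestrict B'
    ((LinearMap.inl R S F).comp (Algebra.linearMap R S))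
    (fun r => by
      rw [memB']
      show Λ.mkQ (Algebra.linearMap R S r) = qK 0
      rw [map_zero, Submodule.mkQ_apply, Submodule.Quotient.mk_eq_zero]
      exact ⟨r, rfl⟩) with hjR
  have hsnd'_surj : Function.Surjective snd' := by
    intro x
    obtain ⟨s, hs⟩ := Λ.mkQ_surjective (qK x)
    exact ⟨⟨(s, x), (memB' _).mpr hs⟩, rfl⟩
  have hexact_jsnd : Function.Exact jR snd' := by
    intro y
    constructor
    · intro hy
      have hy2 : (y : S × F).2 = 0 := hy
      have hmk : Λ.mkQ (y : S × F).1 = 0 := by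
        have := (memB' _).mp y.2
        rw [this, hy2, map_zero]
      rw [Submodule.mkQ_apply, Submodule.Quotient.mk_eq_zero] at hmk
      obtain ⟨r, hr⟩ := hmk
      refine ⟨r, ?_⟩
      apply Subtype.ext
      simp [hjR]
      exact Prod.ext (by simpa using hr) (by simp [hy2])
    · rintro ⟨r, rfl⟩
      simp [hsnd', hjR]
  have hK : Function.Injective (LinearMap.lTensor S NK.subtype) := by
    rw [← LinearMap.ker_eq_bot, LinearMap.ker_eq_bot']
    intro z hz
    have h1 : LinearMap.lTensor S snd' (LinearMap.lTensor S ι' z) = 0 := by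
      have hcomp : snd'.comp ι' = NK.subtype := by ext n; simp [hsnd', hι']; rfl
      rw [← LinearMap.lTensor_comp_apply, hcomp, hz]
    obtain ⟨w, hw⟩ := (lTensor_exact S hexact_jsnd hsnd'_surj _).mp h1
    have hcomp1 : p'.comp jR = Algebra.linearMap R S := by ext r; simp [hp', hjR]
    have hcomp2 : p'.comp ι' = 0 := by ext n; simp [hp', hι']; rfl
    have h2 : LinearMap.lTensor S (Algebra.linearMap R S) w = 0 := by
      rw [← hcomp1, LinearMap.lTensor_comp_apply, hw, ← LinearMap.lTensor_comp_apply, hcomp2]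
      simp
    have hw0 : w = 0 := lam_lTensor_inj (by rw [h2, map_zero])
    apply hint
    rw [← hw, hw0, map_zero, map_zero]
  have hinj_lt : Function.Injective (LinearMap.lTensor S πstar) :=
    aux_L S πstar ev1 hπ_inj hexact_πev hev_surj qK hqK_surj hK
  -- assemble
  refine ⟨act.comp (LinearMap.lTensor S πstar), ?_, ?_, ?_⟩
  · intro s f t
    rfl
  · rw [LinearMap.coe_comp]
    exact act_bij.comp ⟨hinj_lt, hsurj_lt⟩
  · ext t
    show Λ.mkQ (t * 1) = Λ.mkQ t
    rw [mul_one]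
end

section
/- Assume moreover that Tor₁^R(S, S) = 0. Then: (a) the map λ' : S' → S ⊗_R S' defined by f ↦ 1 ⊗ f is injective; (b) the sequence 0 → S' → S ⊗_R S' → (S/R) ⊗_R S' → 0, with first map λ' and second map π ⊗ id_{S'}, is an exact sequence of R-modules; and (c) the evaluation map ψ : (S/R) ⊗_R S' → S/R defined by y ⊗ g ↦ g(y) is bijective. -/
open CategoryTheory TensorProduct

universe u

namespace Stmt4Aux
variable {R S : Type u} [CommRing R] [CommRing S] [Algebra R S]

section Defs
variable (R S)
noncomputable abbrev KK := S ⧸ LinearMap.range (Algebra.linearMap R S)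
noncomputable abbrev BB := Module.End R (KK R S)
noncomputable abbrev HH := S →ₗ[R] KK R S
noncomputable abbrev piQ : S →ₗ[R] KK R S := (LinearMap.range (Algebra.linearMap R S)).mkQ
noncomputable def incl : BB R S →ₗ[R] HH R S :=
  (LinearMap.llcomp R S (KK R S) (KK R S)).flip (piQ R S)
noncomputable def ev1 : HH R S →ₗ[R] KK R S := LinearMap.applyₗ (1 : S)
end Defs

lemma incl_apply (g : BB R S) : incl R S g = g ∘ₗ piQ R S := rfl
lemma ev1_apply (φ : HH R S) : ev1 R S φ = φ 1 := rfl
lemma piQ_one : piQ R S (1 : S) = 0 := by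
  simp only [Submodule.mkQ_apply, Submodule.Quotient.mk_eq_zero]
  exact ⟨1, by simp⟩

lemma ev1_surjective : Function.Surjective (ev1 R S) := by
  intro y
  obtain ⟨s, rfl⟩ := Submodule.mkQ_surjective _ y
  exact ⟨(piQ R S) ∘ₗ (LinearMap.mul R S s), by simp [ev1_apply]⟩

set_option maxHeartbeats 1000000 in
set_option synthInstance.maxHeartbeats 400000 in
theorem lTensor_incl_injective
    {P₀ P₁ P₂ : Type u} [AddCommGroup P₀] [Module R P₀]
    [AddCommGroup P₁] [Module R P₁] [AddCommGroup P₂] [Module R P₂]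
    (hproj : Module.Projective R P₀)
    (p : P₀ →ₗ[R] S) (d₁ : P₁ →ₗ[R] P₀) (d₂ : P₂ →ₗ[R] P₁)
    (hp : Function.Surjective p)
    (hd₁ : LinearMap.range d₁ = LinearMap.ker p)
    (hd₂ : LinearMap.range d₂ = LinearMap.ker d₁)
    (hstar : ∀ v : S ⊗[R] P₁, LinearMap.lTensor S d₁ v = 0 →
      ∃ u : S ⊗[R] P₂, LinearMap.lTensor S d₂ u = v) :
    Function.Injective (LinearMap.lTensor S (incl R S)) := by
  classical
  obtain ⟨z₀, hz₀⟩ := hp 1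
  set lam : R →ₗ[R] S := Algebra.linearMap R S with hlam
  let f₀ : R →ₗ[R] P₀ := LinearMap.toSpanSingleton R P₀ z₀
  have hf₀ : ∀ r : R, f₀ r = r • z₀ := fun r => rfl
  have hpf₀ : p ∘ₗ f₀ = lam := by
    ext
    show p (f₀ 1) = lam 1
    rw [hf₀, one_smul, hz₀, hlam]
    simp
  let ε : P₀ →ₗ[R] KK R S := (piQ R S) ∘ₗ p
  -- the pullback E ⊆ HH × P₀
  let Φ : (HH R S × P₀) →ₗ[R] KK R S :=
    (ev1 R S) ∘ₗ (LinearMap.fst R (HH R S) P₀) - ε ∘ₗ (LinearMap.snd R (HH R S) P₀)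
  let E := LinearMap.ker Φ
  have memE : ∀ x : HH R S × P₀, x ∈ E ↔ (ev1 R S) x.1 = ε x.2 := by
    intro x
    simp [E, Φ, LinearMap.mem_ker, sub_eq_zero]
  -- maps
  have hιA_mem : ∀ g : BB R S, ((incl R S).prod (0 : BB R S →ₗ[R] P₀)) g ∈ E := by
    intro g
    rw [memE]
    have h1 : ev1 R S (incl R S g) = 0 := by
      rw [ev1_apply, incl_apply, LinearMap.comp_apply, piQ_one, map_zero]
    show ev1 R S (incl R S g) = ε 0
    rw [h1, map_zero]
  let ιA : BB R S →ₗ[R] E := LinearMap.codRestrict E ((incl R S).prod 0) hιA_mem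
  let projM : E →ₗ[R] HH R S := (LinearMap.fst R (HH R S) P₀) ∘ₗ E.subtype
  let q : E →ₗ[R] P₀ := (LinearMap.snd R (HH R S) P₀) ∘ₗ E.subtype
  -- κ : P₁ × R → E
  let D1 : (P₁ × R) →ₗ[R] P₀ := d₁ ∘ₗ (LinearMap.fst R P₁ R) + f₀ ∘ₗ (LinearMap.snd R P₁ R)
  have hD1 : ∀ w : P₁ × R, D1 w = d₁ w.1 + f₀ w.2 := fun w => rfl
  have hκmem : ∀ w : P₁ × R, ((0 : (P₁ × R) →ₗ[R] HH R S).prod D1) w ∈ E := by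
    intro w
    rw [memE]
    have h1 : p (d₁ w.1) = 0 := by
      have : d₁ w.1 ∈ LinearMap.ker p := hd₁ ▸ LinearMap.mem_range_self d₁ w.1
      simpa using this
    have h2 : p (f₀ w.2) = lam w.2 := by rw [← hpf₀]; rfl
    have h3 : ε (D1 w) = 0 := by
      show piQ R S (p (D1 w)) = 0
      rw [hD1, map_add, h1, h2, zero_add]
      exact (Submodule.Quotient.mk_eq_zero _).2 ⟨w.2, rfl⟩
    show ev1 R S 0 = ε (D1 w)
    rw [h3, map_zero]
  let κ : (P₁ × R) →ₗ[R] E := LinearMap.codRestrict E ((0 : (P₁ × R) →ₗ[R] HH R S).prod D1) hκmem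
  -- exactness of κ, projM and surjectivity of projM
  have hprojM_surj : Function.Surjective projM := by
    intro φ
    obtain ⟨s, hs⟩ := Submodule.mkQ_surjective _ (ev1 R S φ)
    obtain ⟨c₀, hc₀⟩ := hp s
    refine ⟨⟨(φ, c₀), ?_⟩, rfl⟩
    rw [memE]
    show ev1 R S φ = piQ R S (p c₀)
    rw [hc₀, ← hs]
  have hexact : Function.Exact κ projM := by
    intro w
    constructor
    · intro hw
      obtain ⟨⟨h, c⟩, hmem⟩ := w
      have hh : h = 0 := hw
      rw [memE] at hmem
      subst hh
      have hc : ε c = 0 := by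
        have : ev1 R S (0 : HH R S) = ε c := hmem
        simpa using this.symm
      have hc' : p c ∈ LinearMap.range (Algebra.linearMap R S) :=
        (Submodule.Quotient.mk_eq_zero _).1 hc
      obtain ⟨r, hr⟩ := hc'
      have hker : c - r • z₀ ∈ LinearMap.ker p := by
        simp only [LinearMap.mem_ker, map_sub, map_smul, hz₀]
        rw [← hr, Algebra.linearMap_apply, Algebra.algebraMap_eq_smul_one]
        exact sub_self _
      rw [← hd₁] at hker
      obtain ⟨c₁, hc₁⟩ := hker
      refine ⟨(c₁, r), ?_⟩
      apply Subtype.ext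
      have hD : D1 (c₁, r) = c := by
        rw [hD1]
        show d₁ c₁ + f₀ r = c
        rw [hc₁, hf₀, sub_add_cancel]
      show ((0 : HH R S), D1 (c₁, r)) = ((0 : HH R S), c)
      rw [hD]
    · rintro ⟨⟨c₁, r⟩, rfl⟩
      rfl
  -- lifting e : P₀ → HH with ev1 ∘ e = ε
  obtain ⟨e, he⟩ := Module.projective_lifting_property (ev1 R S) ε (ev1_surjective)
  -- retraction rmap : E → BB
  have hEker : ∀ x : E, LinearMap.range (Algebra.linearMap R S) ≤
      LinearMap.ker ((x : HH R S × P₀).1 - e (x : HH R S × P₀).2) := by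
    rintro x _ ⟨r, rfl⟩
    have hx := (memE x).1 x.2
    have h1 : ((x : HH R S × P₀).1 - e (x : HH R S × P₀).2) 1 = 0 := by
      have he2 : ev1 R S (e (x : HH R S × P₀).2) = ε (x : HH R S × P₀).2 := by
        rw [← he]; rfl
      simp only [LinearMap.sub_apply]
      rw [← ev1_apply, ← ev1_apply, he2, hx]
      simp
    simp only [LinearMap.mem_ker]
    show ((x : HH R S × P₀).1 - e (x : HH R S × P₀).2) (algebraMap R S r) = 0
    rw [Algebra.algebraMap_eq_smul_one, map_smul, h1, smul_zero]
  let rmap : E →ₗ[R] BB R S :=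
    { toFun := fun x => (LinearMap.range (Algebra.linearMap R S)).liftQ
        ((x : HH R S × P₀).1 - e (x : HH R S × P₀).2) (hEker x)
      map_add' := by
        intro x y
        refine Submodule.linearMap_qext _ ?_
        refine LinearMap.ext fun t => ?_
        simp only [LinearMap.add_apply, LinearMap.comp_apply, Submodule.mkQ_apply,
          Submodule.liftQ_apply, Submodule.coe_add, Prod.fst_add, Prod.snd_add, map_add,
          LinearMap.sub_apply]
        abel
      map_smul' := by
        intro r x
        refine Submodule.linearMap_qext _ ?_
        refine LinearMap.ext fun t => ?_
        simp only [LinearMap.smul_apply, LinearMap.comp_apply, Submodule.mkQ_apply,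
          Submodule.liftQ_apply, SetLike.val_smul, Prod.smul_fst, Prod.smul_snd, map_smul,
          LinearMap.sub_apply, RingHom.id_apply]
        rw [smul_sub] }
  have hretr : rmap ∘ₗ ιA = LinearMap.id := by
    refine LinearMap.ext fun g => ?_
    refine Submodule.linearMap_qext _ ?_
    refine LinearMap.ext fun t => ?_
    show (((ιA g : HH R S × P₀)).1 - e ((ιA g : HH R S × P₀)).2) t
        = g (Submodule.Quotient.mk t)
    show ((incl R S g : HH R S) - e 0) t = g (Submodule.Quotient.mk t)
    rw [map_zero, sub_zero]
    rfl
  -- the chase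
  rw [injective_iff_map_eq_zero]
  intro x hx
  have lTc : ∀ {A B C : Type u} [AddCommMonoid A] [AddCommMonoid B] [AddCommMonoid C]
      [Module R A] [Module R B] [Module R C] (g : B →ₗ[R] C) (f : A →ₗ[R] B) (z : S ⊗[R] A),
      LinearMap.lTensor S g (LinearMap.lTensor S f z) = LinearMap.lTensor S (g ∘ₗ f) z :=
    fun g f z => by rw [LinearMap.lTensor_comp]; rfl
  have hcomp1 : projM ∘ₗ ιA = incl R S := by ext g; rfl
  have h2 : LinearMap.lTensor S projM (LinearMap.lTensor S ιA x) = 0 := by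
    rw [lTc projM ιA, hcomp1, hx]
  have hex := @lTensor_exact R (P₁ × R) E (HH R S) _ _ _ _ _ _ _ κ projM S _ _ hexact hprojM_surj
  obtain ⟨v, hv⟩ := (hex (LinearMap.lTensor S ιA x)).1 h2
  have hcomp2 : q ∘ₗ ιA = 0 := by ext g; rfl
  have hqκ : q ∘ₗ κ = D1 := by ext w <;> rfl
  have h4 : LinearMap.lTensor S D1 v = 0 := by
    rw [← hqκ, LinearMap.lTensor_comp_apply, hv, lTc q ιA, hcomp2]
    simp
  -- decompose v
  have hid : (LinearMap.inl R P₁ R) ∘ₗ (LinearMap.fst R P₁ R)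
      + (LinearMap.inr R P₁ R) ∘ₗ (LinearMap.snd R P₁ R) = LinearMap.id := by
    ext w <;> simp
  have hvdec : v = LinearMap.lTensor S (LinearMap.inl R P₁ R)
        (LinearMap.lTensor S (LinearMap.fst R P₁ R) v)
      + LinearMap.lTensor S (LinearMap.inr R P₁ R)
        (LinearMap.lTensor S (LinearMap.snd R P₁ R) v) := by
    rw [lTc (LinearMap.inl R P₁ R) (LinearMap.fst R P₁ R),
      lTc (LinearMap.inr R P₁ R) (LinearMap.snd R P₁ R),
      ← LinearMap.add_apply, ← LinearMap.lTensor_add, hid, LinearMap.lTensor_id,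
      LinearMap.id_apply]
  have hD1inl : D1 ∘ₗ LinearMap.inl R P₁ R = d₁ := by
    refine LinearMap.ext fun a => ?_
    rw [LinearMap.comp_apply, LinearMap.inl_apply, hD1]
    show d₁ a + f₀ 0 = d₁ a
    rw [map_zero, add_zero]
  have hD1inr : D1 ∘ₗ LinearMap.inr R P₁ R = f₀ := by
    refine LinearMap.ext fun r => ?_
    rw [LinearMap.comp_apply, LinearMap.inr_apply, hD1]
    show d₁ 0 + f₀ r = f₀ r
    rw [map_zero, zero_add]
  have h5 : LinearMap.lTensor S d₁ (LinearMap.lTensor S (LinearMap.fst R P₁ R) v)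
      + LinearMap.lTensor S f₀ (LinearMap.lTensor S (LinearMap.snd R P₁ R) v) = 0 := by
    have h := congrArg (LinearMap.lTensor S D1) hvdec
    rw [h4, map_add, lTc D1 (LinearMap.inl R P₁ R), lTc D1 (LinearMap.inr R P₁ R),
      hD1inl, hD1inr] at h
    exact h.symm
  -- y = 0
  have hpd₁ : p ∘ₗ d₁ = 0 := by
    refine LinearMap.ext fun a => ?_
    have : d₁ a ∈ LinearMap.ker p := hd₁ ▸ LinearMap.mem_range_self d₁ a
    simpa using this
  have h6 : LinearMap.lTensor S lam (LinearMap.lTensor S (LinearMap.snd R P₁ R) v) = 0 := by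
    have h := congrArg (LinearMap.lTensor S p) h5
    rw [map_zero, map_add, lTc p d₁, lTc p f₀, hpd₁, hpf₀] at h
    simpa using h
  have hy0 : LinearMap.lTensor S (LinearMap.snd R P₁ R) v = 0 := by
    have hmul : (TensorProduct.lift (LinearMap.mul R S)) ∘ₗ (LinearMap.lTensor S lam)
        = (TensorProduct.rid R S).toLinearMap := by
      apply TensorProduct.ext'
      intro s r
      simp only [LinearMap.comp_apply, LinearMap.lTensor_tmul, lift.tmul,
        LinearEquiv.coe_coe, TensorProduct.rid_tmul]
      show s * (algebraMap R S r) = r • s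
      rw [Algebra.smul_def, mul_comm]
    have h := congrArg (TensorProduct.lift (LinearMap.mul R S)) h6
    rw [← LinearMap.comp_apply, hmul, map_zero] at h
    exact (TensorProduct.rid R S).injective (by simpa using h)
  have h7 : LinearMap.lTensor S d₁ (LinearMap.lTensor S (LinearMap.fst R P₁ R) v) = 0 := by
    rw [hy0, map_zero, add_zero] at h5; exact h5
  obtain ⟨u, hu⟩ := hstar _ h7
  have hdd : ∀ c : P₂, d₁ (d₂ c) = 0 := by
    intro c
    have : d₂ c ∈ LinearMap.ker d₁ := hd₂ ▸ LinearMap.mem_range_self d₂ c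
    simpa using this
  have hκcomp : κ ∘ₗ ((LinearMap.inl R P₁ R) ∘ₗ d₂) = 0 := by
    refine LinearMap.ext fun c => ?_
    apply Subtype.ext
    have h0 : D1 (d₂ c, 0) = 0 := by
      rw [hD1]
      show d₁ (d₂ c) + f₀ 0 = 0
      rw [map_zero, add_zero, hdd]
    show ((0 : HH R S), D1 (d₂ c, 0)) = ((0 : HH R S × P₀))
    rw [h0]
    rfl
  have hxE0 : LinearMap.lTensor S ιA x = 0 := by
    have hvd : v = LinearMap.lTensor S ((LinearMap.inl R P₁ R) ∘ₗ d₂) u := by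
      rw [LinearMap.lTensor_comp_apply, hu]
      rw [hy0, map_zero, add_zero] at hvdec
      exact hvdec
    rw [← hv, hvd, lTc κ ((LinearMap.inl R P₁ R) ∘ₗ d₂), hκcomp]
    simp
  have hfin : x = LinearMap.lTensor S rmap (LinearMap.lTensor S ιA x) := by
    rw [lTc rmap ιA, hretr, LinearMap.lTensor_id, LinearMap.id_apply]
  rw [hfin, hxE0, map_zero]

set_option maxHeartbeats 1000000 in
lemma lTensor_incl_injective_of_tor
    (htor : Limits.IsZero
      (((Tor (ModuleCat.{u} R) 1).obj (ModuleCat.of R S)).obj (ModuleCat.of R S))) :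
    Function.Injective (LinearMap.lTensor S (incl R S)) := by
  obtain ⟨P⟩ := HasProjectiveResolution.out (Z := ModuleCat.of R S)
  set F := (MonoidalCategory.tensoringLeft (ModuleCat.{u} R)).obj (ModuleCat.of R S) with hF
  have htor' : Limits.IsZero ((F.leftDerived 1).obj (ModuleCat.of R S)) := htor
  have hQ : Limits.IsZero
      ((((F.mapHomologicalComplex (ComplexShape.down ℕ)).obj P.complex)).homology 1) :=
    Limits.IsZero.of_iso htor' (P.isoLeftDerivedObj F 1).symm
  have hEx : (((F.mapHomologicalComplex (ComplexShape.down ℕ)).obj P.complex)).ExactAt 1 :=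
    (HomologicalComplex.exactAt_iff_isZero_homology _ _).2 hQ
  rw [HomologicalComplex.exactAt_iff' _ 2 1 0 (by simp) (by simp)] at hEx
  have hstar0 := (ShortComplex.moduleCat_exact_iff _).1 hEx
  have hstar : ∀ v : S ⊗[R] ↥(P.complex.X 1),
      LinearMap.lTensor S (P.complex.d 1 0).hom v = 0 →
      ∃ u : S ⊗[R] ↥(P.complex.X 2),
        LinearMap.lTensor S (P.complex.d 2 1).hom u = v :=
    fun v hv => hstar0 v hv
  -- resolution data
  have hproj : Module.Projective R ↥(P.complex.X 0) :=
    (IsProjective.iff_projective _).2 (P.projective 0)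
  have hp : Function.Surjective (P.π.f 0).hom :=
    (ModuleCat.epi_iff_surjective _).1 inferInstance
  have hd₁ : LinearMap.range (P.complex.d 1 0).hom
      = LinearMap.ker (P.π.f 0).hom :=
    (ShortComplex.moduleCat_exact_iff_range_eq_ker _).1 P.exact₀
  have hEx2 := P.complex_exactAt_succ 0
  rw [HomologicalComplex.exactAt_iff' _ 2 1 0 (by simp) (by simp)] at hEx2
  have hd₂ : LinearMap.range (P.complex.d 2 1).hom
      = LinearMap.ker (P.complex.d 1 0).hom :=
    (ShortComplex.moduleCat_exact_iff_range_eq_ker _).1 hEx2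
  exact lTensor_incl_injective hproj _ _ _ hp hd₁ hd₂ hstar

/-- the bilinear map `(s, φ) ↦ φ ∘ (s * ·)` -/
noncomputable def mu2 : S →ₗ[R] HH R S →ₗ[R] HH R S :=
  LinearMap.mk₂ R (fun s φ => φ ∘ₗ LinearMap.mul R S s)
    (by
      intro s s' φ
      refine LinearMap.ext fun t => ?_
      show φ ((s + s') * t) = φ (s * t) + φ (s' * t)
      rw [add_mul, map_add])
    (by
      intro r s φ
      refine LinearMap.ext fun t => ?_
      show φ ((r • s) * t) = r • φ (s * t)
      rw [smul_mul_assoc, map_smul])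
    (by
      intro s φ φ'
      exact LinearMap.add_comp _ _ _)
    (by
      intro r s φ
      exact LinearMap.smul_comp _ _ _)

noncomputable def mu : S ⊗[R] HH R S →ₗ[R] HH R S := TensorProduct.lift (mu2 (R := R) (S := S))

lemma mu_tmul (s : S) (φ : HH R S) : mu (s ⊗ₜ[R] φ) = φ ∘ₗ LinearMap.mul R S s := by
  simp [mu, mu2]

lemma comp_mul_one (φ : HH R S) : φ ∘ₗ LinearMap.mul R S (1 : S) = φ := by
  refine LinearMap.ext fun t => ?_
  show φ (1 * t) = φ t
  rw [one_mul]

section Epi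

variable (hepi : ∀ (T : Type u) [Ring T] (g₁ g₂ : S →+* T),
      g₁.comp (algebraMap R S) = g₂.comp (algebraMap R S) → g₁ = g₂)

include hepi in
lemma epi_swap (s : S) : (s ⊗ₜ[R] (1 : S) : S ⊗[R] S) = (1 : S) ⊗ₜ[R] s := by
  have h := hepi (S ⊗[R] S) (Algebra.TensorProduct.includeLeftRingHom)
    (Algebra.TensorProduct.includeRight.toRingHom) ?_
  · exact congrArg (fun f => f s) h
  · ext r
    show (algebraMap R S r) ⊗ₜ[R] (1 : S) = (1 : S) ⊗ₜ[R] (algebraMap R S r)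
    rw [Algebra.algebraMap_eq_smul_one]
    exact TensorProduct.smul_tmul r (1 : S) (1 : S)

include hepi in
lemma bilin_swap {M : Type u} [AddCommGroup M] [Module R M]
    (f : S →ₗ[R] S →ₗ[R] M) (s : S) : f s 1 = f 1 s := by
  have := congrArg (TensorProduct.lift f) (epi_swap hepi s)
  simpa using this

include hepi in
lemma tmul_swap (φ : HH R S) (s : S) :
    s ⊗ₜ[R] φ = (1 : S) ⊗ₜ[R] (φ ∘ₗ LinearMap.mul R S s) := by
  let f : S →ₗ[R] S →ₗ[R] (S ⊗[R] HH R S) :=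
    LinearMap.mk₂ R (fun t u => t ⊗ₜ[R] (φ ∘ₗ LinearMap.mul R S u))
      (by intro t t' u; rw [add_tmul])
      (by intro r t u; rw [smul_tmul'])
      (by
        intro t u u'
        have : φ ∘ₗ LinearMap.mul R S (u + u')
            = φ ∘ₗ LinearMap.mul R S u + φ ∘ₗ LinearMap.mul R S u' := by
          refine LinearMap.ext fun w => ?_
          show φ ((u + u') * w) = φ (u * w) + φ (u' * w)
          rw [add_mul, map_add]
        rw [this, tmul_add])
      (by
        intro r t u
        have : φ ∘ₗ LinearMap.mul R S (r • u) = r • (φ ∘ₗ LinearMap.mul R S u) := by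
          refine LinearMap.ext fun w => ?_
          show φ ((r • u) * w) = r • φ (u * w)
          rw [smul_mul_assoc, map_smul]
        rw [this, tmul_smul])
  have h := bilin_swap hepi f s
  have h1 : f s 1 = s ⊗ₜ[R] φ := by
    show s ⊗ₜ[R] (φ ∘ₗ LinearMap.mul R S 1) = s ⊗ₜ[R] φ
    rw [comp_mul_one]
  have h2 : f 1 s = (1 : S) ⊗ₜ[R] (φ ∘ₗ LinearMap.mul R S s) := rfl
  rw [← h1, h, h2]

include hepi in
lemma mu_injective : Function.Injective (mu (R := R) (S := S)) := by
  have hsec : ∀ z : S ⊗[R] HH R S, (1 : S) ⊗ₜ[R] (mu z) = z := by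
    intro z
    induction z using TensorProduct.induction_on with
    | zero => simp
    | tmul s φ => rw [mu_tmul, ← tmul_swap hepi]
    | add a b ha hb => rw [map_add, tmul_add, ha, hb]
  intro a b hab
  have := hsec a
  rw [hab, hsec b] at this
  exact this.symm

end Epi

noncomputable def theta : S ⊗[R] BB R S →ₗ[R] HH R S :=
  mu ∘ₗ LinearMap.lTensor S (incl R S)

lemma theta_tmul (s : S) (g : BB R S) :
    theta (s ⊗ₜ[R] g) = (incl R S g) ∘ₗ LinearMap.mul R S s := by
  show mu (LinearMap.lTensor S (incl R S) (s ⊗ₜ[R] g)) = _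
  rw [LinearMap.lTensor_tmul, mu_tmul]

lemma theta_one_tmul (g : BB R S) : theta ((1 : S) ⊗ₜ[R] g) = incl R S g := by
  rw [theta_tmul, comp_mul_one]

noncomputable def psi : (KK R S) ⊗[R] BB R S →ₗ[R] KK R S :=
  TensorProduct.lift (LinearMap.mk₂ R (fun y g => g y)
    (by intro y y' g; rw [map_add])
    (by intro r y g; rw [map_smul])
    (by intro y g g'; rfl)
    (by intro r y g; rfl))

lemma psi_tmul (y : KK R S) (g : BB R S) : psi (y ⊗ₜ[R] g) = g y := by
  simp [psi]

lemma psi_comp_map :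
    (psi (R := R) (S := S)) ∘ₗ (TensorProduct.map ((LinearMap.range (Algebra.linearMap R S)).mkQ)
      (LinearMap.id (R := R) (M := BB R S)))
    = (ev1 R S) ∘ₗ theta := by
  apply TensorProduct.ext'
  intro s g
  rw [LinearMap.comp_apply, LinearMap.comp_apply, TensorProduct.map_tmul, psi_tmul,
    theta_tmul, ev1_apply]
  show g (Submodule.Quotient.mk s) = g (piQ R S (s * 1))
  rw [mul_one]
  rfl

section Main

variable (hepi : ∀ (T : Type u) [Ring T] (g₁ g₂ : S →+* T),
      g₁.comp (algebraMap R S) = g₂.comp (algebraMap R S) → g₁ = g₂)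
    (htor : Limits.IsZero
      (((Tor (ModuleCat.{u} R) 1).obj (ModuleCat.of R S)).obj (ModuleCat.of R S)))

include hepi htor in
lemma theta_injective : Function.Injective (theta (R := R) (S := S)) :=
  (mu_injective hepi).comp (lTensor_incl_injective_of_tor htor)

include hepi htor in
lemma key_mem (x : S ⊗[R] BB R S) (hx : ev1 R S (theta x) = 0) :
    ∃ g : BB R S, (1 : S) ⊗ₜ[R] g = x := by
  have hker : LinearMap.range (Algebra.linearMap R S) ≤ LinearMap.ker (theta x) := by
    rintro _ ⟨r, rfl⟩
    have h1 : theta x 1 = 0 := hx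
    simp only [LinearMap.mem_ker]
    show theta x (algebraMap R S r) = 0
    rw [Algebra.algebraMap_eq_smul_one, map_smul, h1, smul_zero]
  refine ⟨(LinearMap.range (Algebra.linearMap R S)).liftQ (theta x) hker, ?_⟩
  apply theta_injective hepi htor
  rw [theta_one_tmul]
  rw [incl_apply]
  exact Submodule.liftQ_mkQ _ _ _

include hepi htor in
lemma exact_mid : ∀ z : S ⊗[R] BB R S,
    (TensorProduct.map ((LinearMap.range (Algebra.linearMap R S)).mkQ)
      (LinearMap.id (R := R) (M := BB R S))) z = 0
    ↔ z ∈ Set.range (TensorProduct.mk R S (BB R S) 1) := by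
  intro z
  constructor
  · intro hz
    have h1 : ev1 R S (theta z) = 0 := by
      have := congrArg (psi (R := R) (S := S)) hz
      rw [← LinearMap.comp_apply, psi_comp_map, LinearMap.comp_apply, map_zero] at this
      exact this
    obtain ⟨g, hg⟩ := key_mem hepi htor z h1
    exact ⟨g, hg⟩
  · rintro ⟨g, rfl⟩
    show (TensorProduct.map _ _) ((1 : S) ⊗ₜ[R] g) = 0
    rw [TensorProduct.map_tmul]
    have : (LinearMap.range (Algebra.linearMap R S)).mkQ (1 : S) = 0 := piQ_one
    rw [this, zero_tmul]

end Main

end Stmt4Aux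

open Stmt4Aux in
-- main
/-- Let `λ = algebraMap R S` be an injective ring epimorphism between commutative rings with
`Tor₁^R(S, S) = 0`.  Write `S/R` for the quotient `R`-module `S ⧸ λ(R)` with projection `π`,
and `S' = End_R(S/R)`.  Then:
(a) the map `λ' : S' → S ⊗_R S'`, `f ↦ 1 ⊗ f`, is injective;
(b) the sequence `0 → S' → S ⊗_R S' → (S/R) ⊗_R S' → 0`, with maps `λ'` and `π ⊗ id`,
    is exact;
(c) the evaluation map `ψ : (S/R) ⊗_R S' → S/R`, `y ⊗ g ↦ g y`, is bijective. -/
theorem stmt_4 {R S : Type u} [CommRing R] [CommRing S] [Algebra R S]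
    (hinj : Function.Injective (algebraMap R S))
    (hepi : ∀ (T : Type u) [Ring T] (g₁ g₂ : S →+* T),
      g₁.comp (algebraMap R S) = g₂.comp (algebraMap R S) → g₁ = g₂)
    (htor : Limits.IsZero
      (((Tor (ModuleCat.{u} R) 1).obj (ModuleCat.of R S)).obj (ModuleCat.of R S))) :
    Function.Injective
      (TensorProduct.mk R S (Module.End R (S ⧸ LinearMap.range (Algebra.linearMap R S))) 1) ∧
    Function.Exact
      (TensorProduct.mk R S (Module.End R (S ⧸ LinearMap.range (Algebra.linearMap R S))) 1)
      (TensorProduct.map (LinearMap.range (Algebra.linearMap R S)).mkQ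
        (LinearMap.id (R := R)
          (M := Module.End R (S ⧸ LinearMap.range (Algebra.linearMap R S))))) ∧
    Function.Surjective
      (TensorProduct.map (LinearMap.range (Algebra.linearMap R S)).mkQ
        (LinearMap.id (R := R)
          (M := Module.End R (S ⧸ LinearMap.range (Algebra.linearMap R S))))) ∧
    ∃ ψ : ((S ⧸ LinearMap.range (Algebra.linearMap R S)) ⊗[R]
          Module.End R (S ⧸ LinearMap.range (Algebra.linearMap R S))) →ₗ[R]
        (S ⧸ LinearMap.range (Algebra.linearMap R S)),
      (∀ (y : S ⧸ LinearMap.range (Algebra.linearMap R S))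
          (g : Module.End R (S ⧸ LinearMap.range (Algebra.linearMap R S))),
          ψ (y ⊗ₜ[R] g) = g y) ∧
      Function.Bijective ψ := by
  classical
  have msurj : Function.Surjective
      (TensorProduct.map ((LinearMap.range (Algebra.linearMap R S)).mkQ)
        (LinearMap.id (R := R) (M := BB R S))) :=
    TensorProduct.map_surjective (Submodule.mkQ_surjective _) Function.surjective_id
  refine ⟨?_, ?_, msurj, ?_⟩
  · -- (a)
    intro a b h
    have h2 := congrArg (theta (R := R) (S := S)) h
    rw [TensorProduct.mk_apply, TensorProduct.mk_apply, theta_one_tmul, theta_one_tmul,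
      incl_apply, incl_apply] at h2
    exact Submodule.linearMap_qext _ h2
  · -- (b)
    exact exact_mid hepi htor
  · -- (c)
    refine ⟨psi, fun y g => psi_tmul y g, ?_, ?_⟩
    · rw [injective_iff_map_eq_zero]
      intro z hz
      obtain ⟨x, rfl⟩ := msurj z
      have h1 : ev1 R S (theta x) = 0 := by
        have h2 : (psi (R := R) (S := S) ∘ₗ TensorProduct.map
            ((LinearMap.range (Algebra.linearMap R S)).mkQ)
            (LinearMap.id (R := R) (M := BB R S))) x = 0 := hz
        rw [psi_comp_map, LinearMap.comp_apply] at h2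
        exact h2
      obtain ⟨g, hg⟩ := key_mem hepi htor x h1
      exact (exact_mid hepi htor x).2 ⟨g, hg⟩
    · intro y
      exact ⟨y ⊗ₜ[R] LinearMap.id, by rw [psi_tmul]; rfl⟩
end

section
/- Assume moreover that Tor₁^R(S, S) = 0. Then the endomorphism ring S' = End_R(S/R) is commutative, i.e. f ∘ g = g ∘ f for all R-linear endomorphisms f, g of S/R. -/
open CategoryTheory TensorProduct LinearMap

universe u

set_option maxHeartbeats 1000000 in
/-- The engine: if `π : S →ₗ[R] M` is surjective with kernel exactly the image of `R`,
`algebraMap R S` is injective, and `M ⊗[R] S = 0`, then `End_R(M)` is commutative. -/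
private theorem engine_stmt6 {R S : Type u} [CommRing R] [CommRing S] [Algebra R S]
    {M : Type u} [AddCommGroup M] [Module R M] (π : S →ₗ[R] M)
    (hπ : Function.Surjective π)
    (hker : ∀ s : S, π s = 0 ↔ s ∈ LinearMap.range (Algebra.linearMap R S))
    (hinj : Function.Injective (algebraMap R S))
    (hzero : ∀ x : M ⊗[R] S, x = 0)
    (f g : M →ₗ[R] M) : f.comp g = g.comp f := by
  classical
  set lam : R →ₗ[R] S := Algebra.linearMap R S with hlam
  have hinjlam : Function.Injective lam := hinj
  -- free cover of M
  set p : (M →₀ R) →ₗ[R] M := Finsupp.linearCombination R (id : M → M) with hpdef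
  have hp : Function.Surjective p := fun m => ⟨Finsupp.single m 1, by simp [hpdef]⟩
  set L : Submodule R (M →₀ R) := LinearMap.ker p with hLdef
  set ι : L →ₗ[R] (M →₀ R) := L.subtype with hιdef
  -- a set-theoretic section of π and the comparison map α₀
  set σ : M → S := Function.surjInv hπ with hσdef
  have hσ : ∀ m, π (σ m) = m := fun m => Function.surjInv_eq hπ m
  set α₀ : (M →₀ R) →ₗ[R] S := Finsupp.linearCombination R σ with hα₀def
  have hπα₀ : ∀ x, π (α₀ x) = p x := by
    intro x
    have h : π ∘ₗ α₀ = p := Finsupp.lhom_ext fun m r => by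
      simp [hα₀def, hpdef, Finsupp.linearCombination_single, map_smul, hσ]
    exact DFunLike.congr_fun h x
  -- the induced map α₁ : L → R
  have hrange : ∀ x : L, α₀ (ι x) ∈ LinearMap.range lam := by
    intro x
    refine (hker _).mp ?_
    rw [hπα₀]
    exact x.2
  set e : R ≃ₗ[R] LinearMap.range lam := LinearEquiv.ofInjective lam hinjlam with hedef
  set c : L →ₗ[R] LinearMap.range lam :=
    LinearMap.codRestrict _ (α₀ ∘ₗ ι) hrange with hcdef
  set α₁ : L →ₗ[R] R := e.symm.toLinearMap ∘ₗ c with hα₁def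
  have hα₁ : ∀ x : L, lam (α₁ x) = α₀ (ι x) := by
    intro x
    have h1 : e (α₁ x) = c x := by
      rw [hα₁def]; simp
    have h2 : (e (α₁ x) : S) = lam (α₁ x) := by
      rfl
    rw [← h2, h1]
    rfl
  -- the contraction map Φ and the auxiliary map B
  set Φ : L ⊗[R] M →ₗ[R] M := TensorProduct.lift ((LinearMap.lsmul R M) ∘ₗ α₁) with hΦdef
  have hΦtmul : ∀ (x : L) (m : M), Φ (x ⊗ₜ[R] m) = α₁ x • m := fun x m => by
    simp [hΦdef]
  set B : (M →₀ R) ⊗[R] S →ₗ[R] M :=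
    π ∘ₗ (LinearMap.mul' R S) ∘ₗ (rTensor S α₀) with hBdef
  have hBtmul : ∀ (y : M →₀ R) (s : S), B (y ⊗ₜ[R] s) = π (α₀ y * s) := fun y s => by
    simp [hBdef]
  have hBΦ : B ∘ₗ rTensor S ι = Φ ∘ₗ lTensor L π := by
    apply TensorProduct.ext'
    intro x s
    simp only [LinearMap.comp_apply, rTensor_tmul, lTensor_tmul, hBtmul, hΦtmul]
    rw [← hα₁ x, hlam, Algebra.linearMap_apply, ← Algebra.smul_def, map_smul]
  -- key1 : the connecting map computed via Φ
  have key1 : ∀ (zt : L ⊗[R] S) (w : M →₀ R),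
      rTensor S ι zt = w ⊗ₜ[R] (1 : S) → Φ (lTensor L π zt) = p w := by
    intro zt w h
    have h1 : Φ (lTensor L π zt) = B (rTensor S ι zt) := (DFunLike.congr_fun hBΦ zt).symm
    rw [h1, h, hBtmul, mul_one, hπα₀]
  -- exactness of R → S → M
  have hexactRS : Function.Exact lam π := by
    intro s
    rw [hker s]
    exact Iff.rfl
  -- commuting lTensor/rTensor
  have hcomm : ∀ zt : L ⊗[R] S,
      lTensor (M →₀ R) π (rTensor S ι zt) = rTensor M ι (lTensor L π zt) := by
    intro zt
    rw [← LinearMap.comp_apply, ← LinearMap.comp_apply, lTensor_comp_rTensor,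
      rTensor_comp_lTensor]
  have hlamtmul : ∀ v : (M →₀ R) ⊗[R] R,
      lTensor (M →₀ R) lam v = (TensorProduct.rid R (M →₀ R) v) ⊗ₜ[R] (1 : S) := by
    intro v
    have h : lTensor (M →₀ R) lam
        = ((TensorProduct.mk R (M →₀ R) S).flip 1) ∘ₗ
            (TensorProduct.rid R (M →₀ R)).toLinearMap := by
      apply TensorProduct.ext'
      intro x r
      simp only [LinearMap.comp_apply, lTensor_tmul, LinearEquiv.coe_coe,
        TensorProduct.rid_tmul, TensorProduct.mk_apply, LinearMap.flip_apply]
      rw [TensorProduct.smul_tmul, hlam]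
      simp [Algebra.smul_def, Algebra.linearMap_apply]
    rw [h]
    rfl
  -- key2 : lifting kernel elements
  have key2 : ∀ z' : L ⊗[R] M, rTensor M ι z' = 0 →
      ∃ (zt : ↥L ⊗[R] S) (w : M →₀ R), lTensor L π zt = z' ∧ rTensor S ι zt = w ⊗ₜ[R] (1 : S) := by
    intro z' hz'
    obtain ⟨zt, hzt⟩ := LinearMap.lTensor_surjective L hπ z'
    have h2 : lTensor (M →₀ R) π (rTensor S ι zt) = 0 := by
      rw [hcomm, hzt, hz']
    obtain ⟨v, hv⟩ := (lTensor_exact (M →₀ R) hexactRS hπ (rTensor S ι zt)).mp h2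
    exact ⟨zt, TensorProduct.rid R (M →₀ R) v, hzt, by rw [← hv, hlamtmul]⟩
  -- key3 : second-slot equivariance of Φ (global)
  have key3 : ∀ (h : M →ₗ[R] M) (z' : L ⊗[R] M), Φ (lTensor L h z') = h (Φ z') := by
    intro h z'
    have hh : Φ ∘ₗ lTensor L h = h ∘ₗ Φ := TensorProduct.ext' fun x m => by
      simp only [LinearMap.comp_apply, lTensor_tmul, hΦtmul, map_smul]
    exact DFunLike.congr_fun hh z'
  -- lifts of endomorphisms to the free cover
  have hplift : ∀ h : M →ₗ[R] M,
      p ∘ₗ Finsupp.lmapDomain R R h = h ∘ₗ p := fun h => Finsupp.lhom_ext fun m r => by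
    simp [hpdef, Finsupp.lmapDomain_apply, Finsupp.mapDomain_single,
      Finsupp.linearCombination_single, map_smul]
  have hmem : ∀ (h : M →ₗ[R] M), ∀ x ∈ L, Finsupp.lmapDomain R R h x ∈ L := by
    intro h x hx
    have h1 := DFunLike.congr_fun (hplift h) x
    simp only [LinearMap.comp_apply] at h1
    have hx0 : p x = 0 := hx
    rw [hLdef, LinearMap.mem_ker, h1, hx0, map_zero]
  have hres : ∀ (h : M →ₗ[R] M) (x : L),
      ι (((Finsupp.lmapDomain R R h).restrict (hmem h)) x) =
        Finsupp.lmapDomain R R h (ι x) := fun h x => rfl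
  -- key4 : first-slot equivariance of Φ on kernel elements
  have key4 : ∀ (h : M →ₗ[R] M) (z' : L ⊗[R] M), rTensor M ι z' = 0 →
      Φ (rTensor M ((Finsupp.lmapDomain R R h).restrict (hmem h)) z') = h (Φ z') := by
    intro h z' hz'
    obtain ⟨zt, w, hzt, hw⟩ := key2 z' hz'
    have e1 : Φ z' = p w := by rw [← hzt]; exact key1 zt w hw
    have hcompι : ι ∘ₗ ((Finsupp.lmapDomain R R h).restrict (hmem h))
        = Finsupp.lmapDomain R R h ∘ₗ ι := LinearMap.ext (hres h)
    have h2 : lTensor L π (rTensor S ((Finsupp.lmapDomain R R h).restrict (hmem h)) zt)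
        = rTensor M ((Finsupp.lmapDomain R R h).restrict (hmem h)) z' := by
      rw [← hzt, ← LinearMap.comp_apply, ← LinearMap.comp_apply, lTensor_comp_rTensor,
        rTensor_comp_lTensor]
    have h3 : rTensor S ι (rTensor S ((Finsupp.lmapDomain R R h).restrict (hmem h)) zt)
        = (Finsupp.lmapDomain R R h w) ⊗ₜ[R] (1 : S) := by
      rw [← LinearMap.comp_apply, ← rTensor_comp, hcompι, rTensor_comp,
        LinearMap.comp_apply, hw, rTensor_tmul]
    have h4 := key1 _ _ h3
    rw [h2] at h4
    have h5 := DFunLike.congr_fun (hplift h) w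
    simp only [LinearMap.comp_apply] at h5
    rw [h4, h5, e1]
  -- the final chase
  apply LinearMap.ext
  intro m
  simp only [LinearMap.comp_apply]
  have hexactLG : Function.Exact ι p := by
    intro y
    constructor
    · intro hy; exact ⟨⟨y, hy⟩, rfl⟩
    · rintro ⟨x, rfl⟩; exact x.2
  have h0 : rTensor S p ((Finsupp.single m 1) ⊗ₜ[R] (1 : S)) = 0 := hzero _
  have hex := rTensor_exact (R := R) (M := ↥L) (N := M →₀ R) (P := M) (f := ι) (g := p)
    (Q := S) hexactLG hp
  obtain ⟨zt0, hzt0⟩ := (hex _).mp h0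
  have hπ1 : π 1 = 0 := (hker 1).mpr ⟨1, by rw [hlam]; simp⟩
  have hzker : rTensor M ι (lTensor L π zt0) = 0 := by
    rw [← hcomm, hzt0, lTensor_tmul, hπ1, TensorProduct.tmul_zero]
  have hΦz : Φ (lTensor L π zt0) = m := by
    rw [key1 zt0 _ hzt0]
    simp [hpdef]
  have hswap : ∀ a : M →ₗ[R] M,
      (rTensor M ι) ∘ₗ (lTensor (↥L) a) = (lTensor (M →₀ R) a) ∘ₗ (rTensor M ι) := fun a => by
    rw [rTensor_comp_lTensor, lTensor_comp_rTensor]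
  have hker2 : rTensor M ι (lTensor L f (lTensor L π zt0)) = 0 := by
    have h := DFunLike.congr_fun (hswap f) (lTensor L π zt0)
    simp only [LinearMap.comp_apply] at h
    rw [h, hzker, map_zero]
  have hswap2 : ∀ a : M →ₗ[R] M,
      (lTensor (↥L) a) ∘ₗ (rTensor M ((Finsupp.lmapDomain R R g).restrict (hmem g)))
        = (rTensor M ((Finsupp.lmapDomain R R g).restrict (hmem g))) ∘ₗ (lTensor (↥L) a) :=
    fun a => by rw [lTensor_comp_rTensor, rTensor_comp_lTensor]
  have c3 : lTensor L f (rTensor M ((Finsupp.lmapDomain R R g).restrict (hmem g))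
        (lTensor L π zt0))
      = rTensor M ((Finsupp.lmapDomain R R g).restrict (hmem g))
        (lTensor L f (lTensor L π zt0)) := by
    have h := DFunLike.congr_fun (hswap2 f) (lTensor L π zt0)
    simp only [LinearMap.comp_apply] at h
    exact h
  have c1 : f (g m) = Φ (lTensor L f (rTensor M
      ((Finsupp.lmapDomain R R g).restrict (hmem g)) (lTensor L π zt0))) := by
    rw [key3, key4 g _ hzker, hΦz]
  have c2 : g (f m) = Φ (rTensor M ((Finsupp.lmapDomain R R g).restrict (hmem g))
      (lTensor L f (lTensor L π zt0))) := by
    rw [key4 g _ hker2, key3, hΦz]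
  rw [c1, c3, ← c2]

/-- Let `λ = algebraMap R S` be an injective ring epimorphism between commutative rings
with `Tor₁^R(S, S) = 0`.  Then the endomorphism ring `S' = End_R(S/R)` of the quotient
`R`-module `S/R = S ⧸ λ(R)` is commutative: `f ∘ g = g ∘ f` for all `R`-linear
endomorphisms `f, g` of `S/R`. -/
theorem stmt_6 {R S : Type u} [CommRing R] [CommRing S] [Algebra R S]
    (hinj : Function.Injective (algebraMap R S))
    (hepi : ∀ (T : Type u) [Ring T] (g₁ g₂ : S →+* T),
      g₁.comp (algebraMap R S) = g₂.comp (algebraMap R S) → g₁ = g₂)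
    (htor : Limits.IsZero
      (((Tor (ModuleCat.{u} R) 1).obj (ModuleCat.of R S)).obj (ModuleCat.of R S))) :
    ∀ f g : (S ⧸ LinearMap.range (Algebra.linearMap R S)) →ₗ[R]
        (S ⧸ LinearMap.range (Algebra.linearMap R S)),
      f.comp g = g.comp f := by
  intro f g
  -- the epimorphism property gives `x ⊗ 1 = 1 ⊗ x` in `S ⊗[R] S`
  have key : ∀ x : S, (x ⊗ₜ[R] (1 : S) : S ⊗[R] S) = 1 ⊗ₜ[R] x := by
    have h := hepi (S ⊗[R] S)
      (Algebra.TensorProduct.includeLeft : S →ₐ[R] S ⊗[R] S).toRingHom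
      (Algebra.TensorProduct.includeRight : S →ₐ[R] S ⊗[R] S).toRingHom
      (RingHom.ext fun r => by simp)
    intro x
    have := RingHom.congr_fun h x
    simpa using this
  have key2 : ∀ x s : S, (x ⊗ₜ[R] s : S ⊗[R] S) = 1 ⊗ₜ[R] (x * s) := by
    intro x s
    calc x ⊗ₜ[R] s = (x ⊗ₜ[R] (1 : S)) * ((1 : S) ⊗ₜ[R] s) := by
          rw [Algebra.TensorProduct.tmul_mul_tmul, mul_one, one_mul]
      _ = ((1 : S) ⊗ₜ[R] x) * ((1 : S) ⊗ₜ[R] s) := by rw [key]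
      _ = (1 : S) ⊗ₜ[R] (x * s) := by rw [Algebra.TensorProduct.tmul_mul_tmul, one_mul]
  -- hence `(S/R) ⊗[R] S = 0`
  have hzero : ∀ x : (S ⧸ LinearMap.range (Algebra.linearMap R S)) ⊗[R] S, x = 0 := by
    have hπ1 : (LinearMap.range (Algebra.linearMap R S)).mkQ 1 = 0 := (Submodule.Quotient.mk_eq_zero (LinearMap.range (Algebra.linearMap R S))).mpr ⟨1, by simp⟩
    intro x
    induction x with
    | zero => rfl
    | tmul m s =>
      obtain ⟨y, rfl⟩ := Submodule.mkQ_surjective (LinearMap.range (Algebra.linearMap R S)) m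
      have h1 : ((LinearMap.range (Algebra.linearMap R S)).mkQ y) ⊗ₜ[R] s = LinearMap.rTensor S (LinearMap.range (Algebra.linearMap R S)).mkQ (y ⊗ₜ[R] s) := rfl
      rw [h1, key2 y s, LinearMap.rTensor_tmul, hπ1, TensorProduct.zero_tmul]
    | add x y hx hy => rw [hx, hy, add_zero]
  exact engine_stmt6 (LinearMap.range (Algebra.linearMap R S)).mkQ (Submodule.mkQ_surjective (LinearMap.range (Algebra.linearMap R S)))
    (fun s => by rw [Submodule.mkQ_apply]; exact Submodule.Quotient.mk_eq_zero (LinearMap.range (Algebra.linearMap R S))) hinj hzero f g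
end

section
/- Let R₀ be a commutative ring and let R₁ and R₂ be (associative, unital, possibly noncommutative) R₀-algebras, with structure maps having central image. Suppose the structure map algebraMap : R₀ → R₁ is a ring epimorphism. Then for every ring T and every pair of ring homomorphisms f₁ : R₁ → T and f₂ : R₂ → T satisfying f₁ ∘ algebraMap_{R₁} = f₂ ∘ algebraMap_{R₂} : R₀ → T, the following hold: (a) f₁(x)·f₂(y) = f₂(y)·f₁(x) for all x ∈ R₁ and y ∈ R₂; (b) there exists a unique ring homomorphism F : R₁ ⊗_{R₀} R₂ → T such that F(x ⊗ 1) = f₁(x) and F(1 ⊗ y) = f₂(y) for all x ∈ R₁, y ∈ R₂. In particular, R₁ ⊗_{R₀} R₂ with the maps x ↦ x ⊗ 1 and y ↦ 1 ⊗ y is the coproduct of R₁ and R₂ in the category of R₀-rings. -/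
open TensorProduct

universe u

/-- Let `R₀` be a commutative ring and `R₁`, `R₂` (possibly noncommutative) `R₀`-algebras.
Suppose `algebraMap R₀ R₁` is a ring epimorphism.  Then for every ring `T` and all ring
homomorphisms `f₁ : R₁ → T`, `f₂ : R₂ → T` with `f₁ ∘ algebraMap = f₂ ∘ algebraMap`:
(a) `f₁ x` and `f₂ y` commute for all `x, y`;
(b) there is a unique ring homomorphism `F : R₁ ⊗[R₀] R₂ → T` with `F (x ⊗ 1) = f₁ x`
    and `F (1 ⊗ y) = f₂ y`.
In particular `R₁ ⊗[R₀] R₂` is the coproduct of `R₁` and `R₂` over `R₀`. -/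
theorem stmt_7 {R₀ R₁ R₂ : Type u} [CommRing R₀] [Ring R₁] [Ring R₂]
    [Algebra R₀ R₁] [Algebra R₀ R₂]
    (hepi : ∀ (T : Type u) [Ring T] (g₁ g₂ : R₁ →+* T),
      g₁.comp (algebraMap R₀ R₁) = g₂.comp (algebraMap R₀ R₁) → g₁ = g₂)
    (T : Type u) [Ring T] (f₁ : R₁ →+* T) (f₂ : R₂ →+* T)
    (hcomp : f₁.comp (algebraMap R₀ R₁) = f₂.comp (algebraMap R₀ R₂)) :
    (∀ (x : R₁) (y : R₂), f₁ x * f₂ y = f₂ y * f₁ x) ∧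
    (∃! F : (R₁ ⊗[R₀] R₂) →+* T,
      (∀ x : R₁, F (x ⊗ₜ[R₀] (1 : R₂)) = f₁ x) ∧
      (∀ y : R₂, F ((1 : R₁) ⊗ₜ[R₀] y) = f₂ y)) := by
  have hc0 : ∀ r : R₀, f₁ (algebraMap R₀ R₁ r) = f₂ (algebraMap R₀ R₂ r) := fun r =>
    RingHom.congr_fun hcomp r
  -- (a) commutation, via the epimorphism property applied to a square-zero extension
  have hcommute : ∀ (x : R₁) (y : R₂), f₁ x * f₂ y = f₂ y * f₁ x := by
    intro x y
    set t := f₂ y with ht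
    -- `g₁ a = (f₁ a, f₁ a * t - t * f₁ a)` is a ring hom into the trivial square-zero extension
    let g₁ : R₁ →+* TrivSqZeroExt T T :=
      { toFun := fun a => (⟨f₁ a, f₁ a * t - t * f₁ a⟩ : T × T)
        map_one' := by
          refine TrivSqZeroExt.ext ?_ ?_ <;> simp
        map_mul' := by
          intro a b
          refine TrivSqZeroExt.ext ?_ ?_
          · show f₁ (a * b) = f₁ a * f₁ b
            exact map_mul f₁ a b
          · simp only [TrivSqZeroExt.snd_mul, map_mul]
            show f₁ a * f₁ b * t - t * (f₁ a * f₁ b) =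
              f₁ a * (f₁ b * t - t * f₁ b) + (f₁ a * t - t * f₁ a) * f₁ b
            noncomm_ring
        map_zero' := by
          refine TrivSqZeroExt.ext ?_ ?_ <;> simp
        map_add' := by
          intro a b
          refine TrivSqZeroExt.ext ?_ ?_
          · show f₁ (a + b) = f₁ a + f₁ b
            exact map_add f₁ a b
          · show f₁ (a + b) * t - t * f₁ (a + b) = (f₁ a * t - t * f₁ a) + (f₁ b * t - t * f₁ b)
            simp only [map_add]; noncomm_ring }
    let g₂ : R₁ →+* TrivSqZeroExt T T :=
      { toFun := fun a => (⟨f₁ a, 0⟩ : T × T)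
        map_one' := by refine TrivSqZeroExt.ext ?_ ?_ <;> simp
        map_mul' := by
          intro a b
          refine TrivSqZeroExt.ext ?_ ?_
          · show f₁ (a * b) = f₁ a * f₁ b
            exact map_mul f₁ a b
          · exact ((TrivSqZeroExt.snd_mul _ _).trans (by simp)).symm
        map_zero' := by refine TrivSqZeroExt.ext ?_ ?_ <;> simp
        map_add' := by
          intro a b
          refine TrivSqZeroExt.ext ?_ ?_
          · show f₁ (a + b) = f₁ a + f₁ b
            exact map_add f₁ a b
          · show (0 : T) = 0 + 0
            simp }
    have hg : g₁ = g₂ := by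
      apply hepi
      refine RingHom.ext fun r => TrivSqZeroExt.ext rfl ?_
      show f₁ (algebraMap R₀ R₁ r) * t - t * f₁ (algebraMap R₀ R₁ r) = 0
      have : f₁ (algebraMap R₀ R₁ r) * t = t * f₁ (algebraMap R₀ R₁ r) := by
        rw [hc0 r, ht, ← map_mul, ← map_mul, Algebra.commutes]
      rw [this, sub_self]
    have h : f₁ x * t - t * f₁ x = 0 :=
      congrArg (fun g : R₁ →+* TrivSqZeroExt T T => (g x).snd) hg
    exact sub_eq_zero.mp h
  refine ⟨hcommute, ?_⟩
  -- (b) existence and uniqueness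
  -- the subring generated by the images of f₁ and f₂
  set S : Subring T := Subring.closure (Set.range f₁ ∪ Set.range f₂) with hS
  have hmem₁ : ∀ x : R₁, f₁ x ∈ S :=
    fun x => Subring.subset_closure (Or.inl ⟨x, rfl⟩)
  have hmem₂ : ∀ y : R₂, f₂ y ∈ S :=
    fun y => Subring.subset_closure (Or.inr ⟨y, rfl⟩)
  -- the structure map R₀ → S is central in S
  have hcentral : ∀ (r : R₀) (s : S), f₁ (algebraMap R₀ R₁ r) * (s : T) =
      (s : T) * f₁ (algebraMap R₀ R₁ r) := by
    intro r s
    have hle : S ≤ Subring.centralizer {f₁ (algebraMap R₀ R₁ r)} := by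
      rw [hS, Subring.closure_le]
      rintro z (⟨x, rfl⟩ | ⟨y, rfl⟩) <;>
        refine SetLike.mem_coe.mpr (Subring.mem_centralizer_iff.mpr ?_) <;>
        rintro g hg <;> rw [Set.mem_singleton_iff] at hg <;> subst hg
      · rw [← map_mul, ← map_mul, Algebra.commutes]
      · rw [hc0 r]
        rw [← map_mul, ← map_mul, Algebra.commutes]
    have := hle s.2
    rw [Subring.mem_centralizer_iff] at this
    exact this _ (Set.mem_singleton _)
  letI : Algebra R₀ S :=
    RingHom.toAlgebra'
      ((f₁.comp (algebraMap R₀ R₁)).codRestrict S (fun r => hmem₁ _))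
      (fun r s => Subtype.ext (hcentral r s))
  have halgS : ∀ r : R₀, ((algebraMap R₀ S r : S) : T) = f₁ (algebraMap R₀ R₁ r) :=
    fun r => rfl
  let f₁' : R₁ →ₐ[R₀] S :=
    { toRingHom := f₁.codRestrict S hmem₁
      commutes' := fun r => Subtype.ext rfl }
  let f₂' : R₂ →ₐ[R₀] S :=
    { toRingHom := f₂.codRestrict S hmem₂
      commutes' := fun r => Subtype.ext (hc0 r).symm }
  have hfg : ∀ (x : R₁) (y : R₂), Commute (f₁' x) (f₂' y) := by
    intro x y
    exact Subtype.ext (hcommute x y)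
  let G : (R₁ ⊗[R₀] R₂) →ₐ[R₀] S := Algebra.TensorProduct.lift f₁' f₂' hfg
  let F : (R₁ ⊗[R₀] R₂) →+* T := S.subtype.comp G.toRingHom
  have hFtmul : ∀ (x : R₁) (y : R₂), F (x ⊗ₜ[R₀] y) = f₁ x * f₂ y := by
    intro x y
    show ((G (x ⊗ₜ[R₀] y) : S) : T) = f₁ x * f₂ y
    rw [Algebra.TensorProduct.lift_tmul]
    rfl
  refine ⟨F, ⟨?_, ?_⟩, ?_⟩
  · intro x; rw [hFtmul, map_one, mul_one]
  · intro y; rw [hFtmul, map_one, one_mul]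
  · rintro F' ⟨h1, h2⟩
    refine RingHom.ext fun z => ?_
    induction z using TensorProduct.induction_on with
    | zero => simp
    | tmul x y =>
      have : x ⊗ₜ[R₀] y = (x ⊗ₜ[R₀] (1 : R₂)) * ((1 : R₁) ⊗ₜ[R₀] y) := by
        rw [Algebra.TensorProduct.tmul_mul_tmul, mul_one, one_mul]
      have hl : F' (x ⊗ₜ[R₀] y) = f₁ x * f₂ y := by rw [this, map_mul, h1, h2]
      rw [hl, hFtmul]
    | add a b ha hb => rw [map_add, map_add, ha, hb]
end

section
/- Let I be a set of prime natural numbers. Consider the map Θ_I : ℚ ⊗_ℤ (∏_{p ∈ I} ℤ_p) → ∏_{p ∈ I} ℚ_p determined by q ⊗ (x_p)_{p ∈ I} ↦ (q·x_p)_{p ∈ I}, using the inclusions ℤ_p ⊆ ℚ_p and ℚ ⊆ ℚ_p. Then Θ_I is an injective ring homomorphism, and its image is exactly the set of tuples (y_p)_{p ∈ I} ∈ ∏_{p ∈ I} ℚ_p such that y_p ∈ ℤ_p (equivalently ‖y_p‖_p ≤ 1) for all but finitely many p ∈ I. -/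
set_option maxHeartbeats 1000000
set_option synthInstance.maxHeartbeats 100000

open TensorProduct

lemma aux_rep {M : Type*} [AddCommGroup M] [Module ℤ M] (z : ℚ ⊗[ℤ] M) :
    ∃ (n : ℕ) (m : M), n ≠ 0 ∧ z = (1 / (n : ℚ)) ⊗ₜ[ℤ] m := by
  induction z using TensorProduct.induction_on with
  | zero => exact ⟨1, 0, one_ne_zero, by simp⟩
  | tmul q m =>
      refine ⟨q.den, _, q.den_nz,
        Eq.trans ?_ (@TensorProduct.smul_tmul ℤ ℤ _ _ ℚ M _ _ _ _ _ (AddCommGroup.toIntModule M).toDistribMulAction _ q.num (1 / (q.den : ℚ)) m)⟩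
      congr 1
      rw [zsmul_eq_mul, mul_one_div, Rat.num_div_den]
  | add x y hx hy =>
      obtain ⟨n₁, m₁, hn₁, rfl⟩ := hx
      obtain ⟨n₂, m₂, hn₂, rfl⟩ := hy
      have h1 : (n₁ : ℚ) ≠ 0 := Nat.cast_ne_zero.2 hn₁
      have h2 : (n₂ : ℚ) ≠ 0 := Nat.cast_ne_zero.2 hn₂
      refine ⟨n₁ * n₂, _, mul_ne_zero hn₁ hn₂,
        Eq.trans (congrArg₂ (· + ·)
          (Eq.trans ?_ (@TensorProduct.smul_tmul ℤ ℤ _ _ ℚ M _ _ _ _ _ (AddCommGroup.toIntModule M).toDistribMulAction _ (n₂ : ℤ) (1 / ((n₁ * n₂ : ℕ) : ℚ)) m₁))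
          (Eq.trans ?_ (@TensorProduct.smul_tmul ℤ ℤ _ _ ℚ M _ _ _ _ _ (AddCommGroup.toIntModule M).toDistribMulAction _ (n₁ : ℤ) (1 / ((n₁ * n₂ : ℕ) : ℚ)) m₂)))
          (TensorProduct.tmul_add (1 / ((n₁ * n₂ : ℕ) : ℚ)) _ _).symm⟩
      · congr 1
        rw [zsmul_eq_mul]
        push_cast
        field_simp
      · congr 1
        rw [zsmul_eq_mul]
        push_cast
        field_simp

lemma aux_clear (p : ℕ) [Fact p.Prime] (y : ℚ_[p]) :
    ∃ k : ℕ, ‖((p : ℚ_[p]) ^ k) * y‖ ≤ 1 := by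
  have hp1 : (1 : ℝ) < p := by exact_mod_cast (Fact.out : p.Prime).one_lt
  obtain ⟨k, hk⟩ := pow_unbounded_of_one_lt ‖y‖ hp1
  refine ⟨k, ?_⟩
  rw [norm_mul, norm_pow, Padic.norm_p, inv_pow]
  rw [inv_mul_le_iff₀ (by positivity), mul_one]
  exact hk.le

/-- Let `I` be a set of prime natural numbers.  The map
`Θ_I : ℚ ⊗_ℤ (∏_{p ∈ I} ℤ_p) → ∏_{p ∈ I} ℚ_p` determined by
`q ⊗ (x_p)_p ↦ (q · x_p)_p` is an injective ring homomorphism whose image is exactly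
the set of tuples `(y_p)_p` with `‖y_p‖_p ≤ 1` (i.e. `y_p ∈ ℤ_p`) for all but finitely
many `p ∈ I`. -/
theorem stmt_10 (I : Set ℕ) [∀ p : I, Fact (Nat.Prime (p : ℕ))] :
    ∃ Θ : (ℚ ⊗[ℤ] ((p : I) → ℤ_[(p : ℕ)])) →+* ((p : I) → ℚ_[(p : ℕ)]),
      (∀ (q : ℚ) (x : (p : I) → ℤ_[(p : ℕ)]),
          Θ (q ⊗ₜ[ℤ] x) = fun p : I => (q : ℚ_[(p : ℕ)]) * ((x p : ℤ_[(p : ℕ)]) : ℚ_[(p : ℕ)])) ∧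
      Function.Injective Θ ∧
      Set.range Θ = {y | {p : I | ¬ ‖y p‖ ≤ 1}.Finite} := by
  classical
  obtain ⟨Θ, hformula⟩ :
      ∃ Θ : (ℚ ⊗[ℤ] ((p : I) → ℤ_[(p : ℕ)])) →+* ((p : I) → ℚ_[(p : ℕ)]),
        ∀ (q : ℚ) (x : (p : I) → ℤ_[(p : ℕ)]),
          Θ (q ⊗ₜ[ℤ] x) = fun p : I => (q : ℚ_[(p : ℕ)]) * ((x p : ℤ_[(p : ℕ)]) : ℚ_[(p : ℕ)]) := by
    let fA : ℚ →ₐ[ℤ] ((p : I) → ℚ_[(p : ℕ)]) :=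
      (algebraMap ℚ ((p : I) → ℚ_[(p : ℕ)])).toIntAlgHom
    let gA : ((p : I) → ℤ_[(p : ℕ)]) →ₐ[ℤ] ((p : I) → ℚ_[(p : ℕ)]) :=
      (Pi.ringHom fun p : I => (PadicInt.Coe.ringHom).comp (Pi.evalRingHom _ p)).toIntAlgHom
    refine ⟨(Algebra.TensorProduct.productMap fA gA).toRingHom, fun q x => ?_⟩
    have h0 : (Algebra.TensorProduct.productMap fA gA).toRingHom (q ⊗ₜ[ℤ] x) = fA q * gA x :=
      Algebra.TensorProduct.productMap_apply_tmul (f := fA) (g := gA) q x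
    rw [h0]
    funext p
    show algebraMap ℚ ((p : I) → ℚ_[(p : ℕ)]) q p * ((x p : ℚ_[(p : ℕ)])) = _
    rw [Pi.algebraMap_apply]
    rw [eq_ratCast (algebraMap ℚ ℚ_[(p : ℕ)]) q]
  refine ⟨Θ, hformula, ?_, ?_⟩
  · -- injectivity
    rw [injective_iff_map_eq_zero]
    intro z hz
    obtain ⟨n, m, hn, rfl⟩ := aux_rep z
    have hm : m = 0 := by
      funext p
      rw [hformula] at hz
      have h := congrFun hz p
      simp only [Pi.zero_apply] at h
      have h1n : ((1 / (n : ℚ) : ℚ) : ℚ_[(p : ℕ)]) ≠ 0 := by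
        rw [Rat.cast_ne_zero]
        exact one_div_ne_zero (Nat.cast_ne_zero.2 hn)
      have h2 := (mul_eq_zero.1 h).resolve_left h1n
      exact (PadicInt.coe_eq_zero (x := m p)).1 h2
    rw [hm, TensorProduct.tmul_zero]
  · -- range
    ext y
    constructor
    · rintro ⟨z, rfl⟩
      obtain ⟨n, m, hn, rfl⟩ := aux_rep z
      rw [hformula]
      simp only [Set.mem_setOf_eq]
      have hsub : {p : I | ¬ ‖((1 / (n : ℚ) : ℚ) : ℚ_[(p : ℕ)]) *
            ((m p : ℤ_[(p : ℕ)]) : ℚ_[(p : ℕ)])‖ ≤ 1}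
          ⊆ Subtype.val ⁻¹' {d : ℕ | d ∣ n} := by
        intro p hp
        simp only [Set.mem_setOf_eq, not_le] at hp
        have hmp : ‖((m p : ℤ_[(p : ℕ)]) : ℚ_[(p : ℕ)])‖ ≤ 1 := (m p).2
        have h1 : (1 : ℝ) < ‖((1 / (n : ℚ) : ℚ) : ℚ_[(p : ℕ)])‖ := by
          by_contra hle
          push_neg at hle
          have hmm := mul_le_one₀ hle (norm_nonneg _) hmp
          rw [← norm_mul] at hmm
          exact absurd hmm (not_le.2 hp)
        have hnorm : ‖((n : ℤ) : ℚ_[(p : ℕ)])‖ < 1 := by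
          have hz : ((n : ℚ_[(p : ℕ)])) ≠ 0 := Nat.cast_ne_zero.2 hn
          have hc : ((1 / (n : ℚ) : ℚ) : ℚ_[(p : ℕ)]) = ((n : ℚ_[(p : ℕ)]))⁻¹ := by
            push_cast
            simp
          rw [hc, norm_inv, one_lt_inv_iff₀] at h1
          exact_mod_cast h1.2
        have hdvd := (Padic.norm_intCast_lt_one_iff (p := (p : ℕ)) (k := (n : ℤ))).1 hnorm
        exact_mod_cast hdvd
      refine Set.Finite.subset (Set.Finite.preimage Subtype.val_injective.injOn
        ((Set.finite_Icc 1 n).subset ?_)) hsub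
      intro d hd
      exact ⟨Nat.pos_of_dvd_of_pos hd (Nat.pos_of_ne_zero hn),
        Nat.le_of_dvd (Nat.pos_of_ne_zero hn) hd⟩
    · intro hy
      simp only [Set.mem_setOf_eq] at hy
      have hex : ∀ p : I, ∃ k : ℕ, ‖((p : ℚ_[(p : ℕ)]) ^ k) * y p‖ ≤ 1 :=
        fun p => aux_clear _ (y p)
      choose k hk using hex
      set S := hy.toFinset with hS
      set n : ℕ := S.prod (fun p => (p : ℕ) ^ k p) with hn
      have hnne : n ≠ 0 := by
        apply Finset.prod_ne_zero_iff.2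
        intro p _
        exact pow_ne_zero _ (Fact.out (p := Nat.Prime (p : ℕ))).pos.ne'
      have hbound : ∀ p : I, ‖((n : ℚ_[(p : ℕ)])) * y p‖ ≤ 1 := by
        intro p
        by_cases hpS : p ∈ S
        · have hsplit : n = (p : ℕ) ^ k p * (S.erase p).prod (fun q => (q : ℕ) ^ k q) := by
            rw [hn, ← Finset.prod_erase_mul _ _ hpS, mul_comm]
          have hceq : ((((p : ℕ) ^ k p * (S.erase p).prod (fun q => (q : ℕ) ^ k q) : ℕ))
                : ℚ_[(p : ℕ)])
              = ((p : ℕ) : ℚ_[(p : ℕ)]) ^ k p *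
                ((((S.erase p).prod (fun q => (q : ℕ) ^ k q) : ℕ)) : ℚ_[(p : ℕ)]) := by
            push_cast
            ring
          rw [hsplit, hceq, mul_comm (((p : ℕ) : ℚ_[(p : ℕ)]) ^ k p), mul_assoc, norm_mul]
          have hr : ‖(((S.erase p).prod (fun q => (q : ℕ) ^ k q) : ℕ) : ℚ_[(p : ℕ)])‖ ≤ 1 := by
            have h := Padic.norm_int_le_one (p := (p : ℕ))
              (((S.erase p).prod (fun q => (q : ℕ) ^ k q) : ℕ) : ℤ)
            rw [Int.cast_natCast] at h
            exact h
          calc ‖(((S.erase p).prod (fun q => (q : ℕ) ^ k q) : ℕ) : ℚ_[(p : ℕ)])‖ *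
                ‖((p : ℕ) : ℚ_[(p : ℕ)]) ^ k p * y p‖
              ≤ 1 * 1 := mul_le_mul hr (hk p) (norm_nonneg _) zero_le_one
            _ = 1 := mul_one 1
        · have hyp : ‖y p‖ ≤ 1 := by
            by_contra h
            exact hpS (hy.mem_toFinset.2 h)
          rw [norm_mul]
          have hnn : ‖((n : ℕ) : ℚ_[(p : ℕ)])‖ ≤ 1 := by
            have h := Padic.norm_int_le_one (p := (p : ℕ)) ((n : ℕ) : ℤ)
            rw [Int.cast_natCast] at h
            exact h
          calc ‖((n : ℕ) : ℚ_[(p : ℕ)])‖ * ‖y p‖ ≤ 1 * 1 :=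
                mul_le_mul hnn hyp (norm_nonneg _) zero_le_one
            _ = 1 := mul_one 1
      refine ⟨(1 / (n : ℚ)) ⊗ₜ[ℤ] (fun p => id (α := ℤ_[(p : ℕ)]) ⟨(n : ℚ_[(p : ℕ)]) * y p, hbound p⟩), ?_⟩
      rw [hformula]
      funext p
      have hz : ((n : ℚ_[(p : ℕ)])) ≠ 0 := Nat.cast_ne_zero.2 hnne
      have hcast : ((1 / (n : ℚ) : ℚ) : ℚ_[(p : ℕ)]) = ((n : ℚ_[(p : ℕ)]))⁻¹ := by
        push_cast
        simp
      show ((1 / (n : ℚ) : ℚ) : ℚ_[(p : ℕ)]) * ((n : ℚ_[(p : ℕ)]) * y p) = y p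
      rw [hcast, ← mul_assoc, inv_mul_cancel₀ hz, one_mul]
end

section
/- Let R be a ring and W a cochain complex of projective left R-modules with Wⁿ = 0 for all n ∉ {−1, 0}. Then for every cochain complex X of left R-modules and every integer n there is a short exact sequence of abelian groups 0 → Hom_{D(R)}(W, H^{n−1}(X)[1]) → Hom_{D(R)}(W, X[n]) → Hom_{D(R)}(W, Hⁿ(X)) → 0; that is, there exist group homomorphisms ι : Hom_{D(R)}(W, H^{n−1}(X)[1]) → Hom_{D(R)}(W, X[n]) and ρ : Hom_{D(R)}(W, X[n]) → Hom_{D(R)}(W, Hⁿ(X)) with ι injective, ρ surjective, and image of ι equal to the kernel of ρ. -/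
open CategoryTheory CategoryTheory.Limits CategoryTheory.Category
open HomologicalComplex

namespace Stmt12Aux

noncomputable section

variable {C : Type*} [Category C] [Abelian C]

/-- Transport of hom-groups along isomorphisms. -/
@[simps]
def homAddEquiv {D : Type*} [Category D] [Preadditive D] {P P' T T' : D}
    (α : P ≅ P') (β : T ≅ T') : (P ⟶ T) ≃+ (P' ⟶ T') where
  toFun f := α.inv ≫ f ≫ β.hom
  invFun g := α.hom ≫ g ≫ β.inv
  left_inv f := by simp
  right_inv g := by simp
  map_add' f g := by simp [Preadditive.add_comp, Preadditive.comp_add]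

variable {W : CochainComplex C ℤ}

section TwoTerm

variable (hW : ∀ i : ℤ, i ≠ -1 → i ≠ 0 → IsZero (W.X i))

/-- Build a chain map out of a two-term complex from its two components. -/
def mkHom {Y : CochainComplex C ℤ} (v : W.X (-1) ⟶ Y.X (-1)) (u : W.X 0 ⟶ Y.X 0)
    (h1 : v ≫ Y.d (-1) 0 = W.d (-1) 0 ≫ u) (h2 : u ≫ Y.d 0 1 = 0) : W ⟶ Y where
  f i := if h : i = -1 then (W.XIsoOfEq h).hom ≫ v ≫ (Y.XIsoOfEq h).inv
    else if h0 : i = 0 then (W.XIsoOfEq h0).hom ≫ u ≫ (Y.XIsoOfEq h0).inv else 0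
  comm' i j hij := by
    have hij' : i + 1 = j := hij
    by_cases hi : i = -1
    · subst hi
      obtain rfl : j = 0 := by omega
      simpa using h1
    · by_cases hi0 : i = 0
      · subst hi0
        obtain rfl : j = 1 := by omega
        simpa using h2
      · exact (hW i hi hi0).eq_of_src _ _

@[simp]
lemma mkHom_f_neg_one {Y : CochainComplex C ℤ} (v : W.X (-1) ⟶ Y.X (-1)) (u : W.X 0 ⟶ Y.X 0)
    (h1 h2) : (mkHom hW v u h1 h2).f (-1) = v := by
  simp [mkHom]

@[simp]
lemma mkHom_f_zero {Y : CochainComplex C ℤ} (v : W.X (-1) ⟶ Y.X (-1)) (u : W.X 0 ⟶ Y.X 0)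
    (h1 h2) : (mkHom hW v u h1 h2).f 0 = u := by
  simp [mkHom]

/-- Build a null-homotopy for a chain map out of a two-term complex from two components. -/
def mkHomotopy {Y : CochainComplex C ℤ} (f : W ⟶ Y) (t0 : W.X 0 ⟶ Y.X (-1))
    (t1 : W.X (-1) ⟶ Y.X (-2))
    (c0 : f.f 0 = t0 ≫ Y.d (-1) 0)
    (c1 : f.f (-1) = W.d (-1) 0 ≫ t0 + t1 ≫ Y.d (-2) (-1)) :
    Homotopy f 0 where
  hom i j := if h : i = 0 ∧ j = -1 then
      (W.XIsoOfEq h.1).hom ≫ t0 ≫ (Y.XIsoOfEq h.2).inv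
    else if h' : i = -1 ∧ j = -2 then
      (W.XIsoOfEq h'.1).hom ≫ t1 ≫ (Y.XIsoOfEq h'.2).inv
    else 0
  zero i j hij := by
    rw [dif_neg (by rintro ⟨rfl, rfl⟩; exact hij (by simp)),
      dif_neg (by rintro ⟨rfl, rfl⟩; exact hij (by simp))]
  comm i := by
    by_cases hi0 : i = 0
    · subst hi0
      rw [dNext_eq _ (show (ComplexShape.up ℤ).Rel 0 1 by simp),
        prevD_eq _ (show (ComplexShape.up ℤ).Rel (-1) 0 by simp)]
      simpa using c0
    · by_cases hi1 : i = -1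
      · subst hi1
        rw [dNext_eq _ (show (ComplexShape.up ℤ).Rel (-1) 0 by simp),
          prevD_eq _ (show (ComplexShape.up ℤ).Rel (-2) (-1) by simp)]
        simpa using c1
      · exact (hW i hi1 hi0).eq_of_src _ _

end TwoTerm


section PartA

variable (hW : ∀ i : ℤ, i ≠ -1 → i ≠ 0 → IsZero (W.X i))
  (hWp : ∀ i : ℤ, Projective (W.X i))

include hW hWp

/-- A chain map from a two-term complex of projectives to an acyclic complex
is null-homotopic. -/
lemma nullHomotopic_to_acyclic {E : CochainComplex C ℤ} (hE : ∀ n : ℤ, E.ExactAt n)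
    (f : W ⟶ E) : Nonempty (Homotopy f 0) := by
  haveI := hWp 0
  haveI := hWp (-1)
  have hf0 : f.f 0 ≫ E.d 0 1 = 0 := by
    rw [f.comm 0 1, (hW 1 (by norm_num) (by norm_num)).eq_of_src (f.f 1) 0, comp_zero]
  have hS0 : (E.sc' (-1) 0 1).Exact :=
    (E.exactAt_iff' (-1) 0 1 (by simp) (by simp)).1 (hE 0)
  let t0 : W.X 0 ⟶ E.X (-1) := hS0.liftFromProjective (f.f 0) hf0
  have ht0 : t0 ≫ E.d (-1) 0 = f.f 0 := hS0.liftFromProjective_comp (f.f 0) hf0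
  have hu : (f.f (-1) - W.d (-1) 0 ≫ t0) ≫ E.d (-1) 0 = 0 := by
    rw [Preadditive.sub_comp, f.comm (-1) 0, assoc, ht0, sub_self]
  have hS1 : (E.sc' (-2) (-1) 0).Exact :=
    (E.exactAt_iff' (-2) (-1) 0 (by simp) (by simp)).1 (hE (-1))
  let t1 : W.X (-1) ⟶ E.X (-2) := hS1.liftFromProjective _ hu
  have ht1 : t1 ≫ E.d (-2) (-1) = f.f (-1) - W.d (-1) 0 ≫ t0 :=
    hS1.liftFromProjective_comp _ hu
  exact ⟨mkHomotopy hW f t0 t1 ht0.symm (by rw [ht1]; abel)⟩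

open HomotopyCategory

/-- Shorthand for the image of a complex in the homotopy category. -/
abbrev Kq (Z : CochainComplex C ℤ) : HomotopyCategory C (ComplexShape.up ℤ) :=
  (HomotopyCategory.quotient C (ComplexShape.up ℤ)).obj Z

lemma to_acyclic_eq_zero (E : HomotopyCategory C (ComplexShape.up ℤ))
    (hE : (subcategoryAcyclic C) E) (f : Kq W ⟶ E) : f = 0 := by
  obtain ⟨E⟩ := E
  have hE' : ∀ n : ℤ, E.ExactAt n :=
    (quotient_obj_mem_subcategoryAcyclic_iff_exactAt E).1 hE
  obtain ⟨f', rfl⟩ := (HomotopyCategory.quotient C (ComplexShape.up ℤ)).map_surjective f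
  obtain ⟨h⟩ := nullHomotopic_to_acyclic hW hWp hE' f'
  rw [HomotopyCategory.eq_of_homotopy _ _ h, Functor.map_zero]
  rfl

open Pretriangulated in
lemma postcomp_bijective {A B : HomotopyCategory C (ComplexShape.up ℤ)} (s : A ⟶ B)
    (hs : (HomotopyCategory.subcategoryAcyclic C).trW s) :
    Function.Bijective (fun (g : Kq W ⟶ A) => g ≫ s) := by
  obtain ⟨Z, g, h, hT, hZ⟩ := hs
  constructor
  · intro a₁ a₂ ha
    dsimp only at ha
    have hd : (a₁ - a₂) ≫ s = 0 := by
      rw [Preadditive.sub_comp, ha, sub_self]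
    obtain ⟨e, he⟩ := Triangle.coyoneda_exact₂ _
      (inv_rot_of_distTriang _ hT) (a₁ - a₂) hd
    have he0 : e = 0 := to_acyclic_eq_zero hW hWp _
      ((subcategoryAcyclic C).le_shift (-1) _ hZ) e
    rw [he0, zero_comp] at he
    exact sub_eq_zero.1 he
  · intro b
    have hb : b ≫ (Triangle.mk s g h).mor₂ = 0 :=
      to_acyclic_eq_zero hW hWp _ hZ _
    obtain ⟨a, ha⟩ := Triangle.coyoneda_exact₂ _ hT b hb
    exact ⟨a, ha.symm⟩

variable [HasDerivedCategory C]

open DerivedCategory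

lemma Qh_map_bijective (Z : CochainComplex C ℤ) :
    Function.Bijective (fun (f : Kq W ⟶ Kq Z) => (Qh (C := C)).map f) := by
  constructor
  · intro f g hfg
    obtain ⟨Z', s, hs, h⟩ := (MorphismProperty.map_eq_iff_postcomp Qh
      (HomotopyCategory.subcategoryAcyclic C).trW f g).1 hfg
    exact (postcomp_bijective hW hWp s hs).injective h
  · intro φ
    obtain ⟨fr, hfr⟩ := Localization.exists_leftFraction Qh
      (HomotopyCategory.subcategoryAcyclic C).trW φ
    obtain ⟨a, ha⟩ := (postcomp_bijective hW hWp fr.s fr.hs).surjective fr.f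
    refine ⟨a, ?_⟩
    rw [hfr, MorphismProperty.LeftFraction.map]
    dsimp only
    rw [← ha, Functor.map_comp, assoc, IsIso.hom_inv_id, comp_id]

/-- The hom groups out of a two-term complex of projectives in the derived category
are computed in the homotopy category. -/
def homEquivQh (Z : CochainComplex C ℤ) :
    (Kq W ⟶ Kq Z) ≃+ ((Qh (C := C)).obj (Kq W) ⟶ (Qh (C := C)).obj (Kq Z)) :=
  AddEquiv.ofBijective
    (AddMonoidHom.mk' (fun f => (Qh (C := C)).map f) (fun _ _ => Functor.map_add _))
    (Qh_map_bijective hW hWp Z)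

end PartA

section Helpers

open HomotopyCategory

/-- Descend an additive map on chain maps to the homotopy category. -/
def descend {K L : CochainComplex C ℤ} {M : Type*} [AddCommGroup M]
    (F : (K ⟶ L) →+ M) (hF : ∀ f g, Homotopy f g → F f = F g) :
    (Kq K ⟶ Kq L) →+ M :=
  AddMonoidHom.mk' (fun φ => F ((HomotopyCategory.quotient C _).preimage φ))
    (fun φ ψ => by
      have h : Homotopy ((HomotopyCategory.quotient C _).preimage (φ + ψ))
          ((HomotopyCategory.quotient C _).preimage φ +
            (HomotopyCategory.quotient C _).preimage ψ) :=
        homotopyOfEq _ _ (by simp only [Functor.map_preimage, Functor.map_add])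
      rw [hF _ _ h, F.map_add])

lemma descend_apply {K L : CochainComplex C ℤ} {M : Type*} [AddCommGroup M]
    (F : (K ⟶ L) →+ M) (hF : ∀ f g, Homotopy f g → F f = F g) (f : K ⟶ L) :
    descend F hF ((HomotopyCategory.quotient C _).map f) = F f :=
  hF _ _ (homotopyOfEq _ _ (by rw [Functor.map_preimage]))

lemma exists_lift_of_homologyπ_comp_zero {Y : CochainComplex C ℤ} {P : C} [Projective P]
    {i j : ℤ} (hij : i + 1 = j) (u : P ⟶ Y.cycles j) (hu : u ≫ Y.homologyπ j = 0) :
    ∃ v : P ⟶ Y.X i, v ≫ Y.toCycles i j = u := by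
  let S : ShortComplex C := ShortComplex.mk (Y.toCycles i j) (Y.homologyπ j)
    (Y.toCycles_comp_homologyπ i j)
  have hS : S.Exact := ShortComplex.exact_of_g_is_cokernel _
    (Y.homologyIsCokernel i j (by rw [CochainComplex.prev]; omega))
  exact ⟨hS.liftFromProjective u hu, hS.liftFromProjective_comp u hu⟩

/-- Precomposition with the differential of `W`. -/
def deltaHom (M : C) : (W.X 0 ⟶ M) →+ (W.X (-1) ⟶ M) :=
  AddMonoidHom.mk' (fun g => W.d (-1) 0 ≫ g)
    (fun _ _ => Preadditive.comp_add _ _ _ _ _ _)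

lemma deltaHom_apply (M : C) (g : W.X 0 ⟶ M) :
    deltaHom (W := W) M g = W.d (-1) 0 ≫ g := rfl

end Helpers

section Rho

open HomotopyCategory

variable (hW : ∀ i : ℤ, i ≠ -1 → i ≠ 0 → IsZero (W.X i)) (Y : CochainComplex C ℤ)

include hW

lemma f_zero_d (f : W ⟶ Y) : f.f 0 ≫ Y.d 0 1 = 0 := by
  rw [f.comm 0 1, (hW 1 (by norm_num) (by norm_num)).eq_of_src (f.f 1) 0, comp_zero]

/-- The degree-0 component of `ρ`. -/
def rhoAux (f : W ⟶ Y) : W.X 0 ⟶ Y.homology 0 :=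
  Y.liftCycles (f.f 0) 1 (by simp) (f_zero_d hW Y f) ≫ Y.homologyπ 0

lemma rhoAux_add (f g : W ⟶ Y) :
    rhoAux hW Y (f + g) = rhoAux hW Y f + rhoAux hW Y g := by
  dsimp only [rhoAux]
  have h : (f + g).f 0 = f.f 0 + g.f 0 := rfl
  rw [← Preadditive.add_comp]
  congr 1
  rw [← cancel_mono (Y.iCycles 0)]
  simp [h, Preadditive.add_comp]

lemma rhoAux_d (f : W ⟶ Y) : W.d (-1) 0 ≫ rhoAux hW Y f = 0 := by
  dsimp only [rhoAux]
  rw [← assoc, comp_liftCycles]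
  have h : W.d (-1) 0 ≫ f.f 0 = f.f (-1) ≫ Y.d (-1) 0 := (f.comm (-1) 0).symm
  exact Y.liftCycles_homologyπ_eq_zero_of_boundary _ 1 _ (f.f (-1)) h

lemma rhoAux_homotopy (f g : W ⟶ Y) (h : Homotopy f g) :
    rhoAux hW Y f = rhoAux hW Y g := by
  have hc := h.comm 0
  rw [dNext_eq _ (show (ComplexShape.up ℤ).Rel 0 1 by simp),
    prevD_eq _ (show (ComplexShape.up ℤ).Rel (-1) 0 by simp),
    (hW 1 (by norm_num) (by norm_num)).eq_of_src (h.hom 1 0) 0, comp_zero, zero_add] at hc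
  dsimp only [rhoAux]
  have key : Y.liftCycles (f.f 0) 1 (by simp) (f_zero_d hW Y f) =
      Y.liftCycles (h.hom 0 (-1) ≫ Y.d (-1) 0) 1 (by simp)
        (by rw [assoc, Y.d_comp_d, comp_zero]) +
      Y.liftCycles (g.f 0) 1 (by simp) (f_zero_d hW Y g) := by
    rw [← cancel_mono (Y.iCycles 0)]
    simp only [liftCycles_i, Preadditive.add_comp]
    rw [hc]
  rw [key, Preadditive.add_comp,
    Y.liftCycles_homologyπ_eq_zero_of_boundary _ 1 _ (h.hom 0 (-1)) rfl, zero_add]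

/-- The chain-level `ρ`, valued in the subgroup of maps annihilating boundaries. -/
def rhoTilde : (W ⟶ Y) →+ (deltaHom (W := W) (Y.homology 0)).ker :=
  AddMonoidHom.mk' (fun f => ⟨rhoAux hW Y f, rhoAux_d hW Y f⟩)
    (fun f g => Subtype.ext (rhoAux_add hW Y f g))

/-- `ρ` on the homotopy category. -/
def rhoK : (Kq W ⟶ Kq Y) →+ (deltaHom (W := W) (Y.homology 0)).ker :=
  descend (rhoTilde hW Y) (fun f g h => Subtype.ext (rhoAux_homotopy hW Y f g h))

variable (hWp : ∀ i : ℤ, Projective (W.X i))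
include hWp

lemma rhoK_surjective : Function.Surjective (rhoK hW Y) := by
  rintro ⟨g, hg⟩
  have hg' : W.d (-1) 0 ≫ g = 0 := hg
  haveI := hWp 0
  haveI := hWp (-1)
  let g₀ : W.X 0 ⟶ Y.cycles 0 := Projective.factorThru g (Y.homologyπ 0)
  have hg₀ : g₀ ≫ Y.homologyπ 0 = g := Projective.factorThru_comp _ _
  obtain ⟨v, hv⟩ := exists_lift_of_homologyπ_comp_zero (Y := Y) (show (-1 : ℤ) + 1 = 0 by norm_num)
    (W.d (-1) 0 ≫ g₀) (by rw [assoc, hg₀, hg'])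
  refine ⟨(HomotopyCategory.quotient C _).map (mkHom hW v (g₀ ≫ Y.iCycles 0) ?_ ?_), ?_⟩
  · rw [← Y.toCycles_i (-1) 0, ← assoc, hv, assoc]
  · rw [assoc, Y.iCycles_d, comp_zero]
  · rw [rhoK, descend_apply]
    refine Subtype.ext ?_
    change rhoAux hW Y _ = _
    dsimp only [rhoAux]
    rw [← hg₀]
    congr 1
    rw [← cancel_mono (Y.iCycles 0)]
    simp

end Rho

section Sigma

open HomotopyCategory

variable (hW : ∀ i : ℤ, i ≠ -1 → i ≠ 0 → IsZero (W.X i)) (Y : CochainComplex C ℤ)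

lemma uAux_d (f : W ⟶ Y) (h : W.X 0 ⟶ Y.X (-1)) (hh : h ≫ Y.d (-1) 0 = f.f 0) :
    (f.f (-1) - W.d (-1) 0 ≫ h) ≫ Y.d (-1) 0 = 0 := by
  rw [Preadditive.sub_comp, f.comm (-1) 0, assoc, hh, sub_self]

/-- The class in `H^{-1}` attached to a chain map whose `ρ` vanishes. -/
def sigmaAux (f : W ⟶ Y) (h : W.X 0 ⟶ Y.X (-1)) (hh : h ≫ Y.d (-1) 0 = f.f 0) :
    W.X (-1) ⟶ Y.homology (-1) :=
  Y.liftCycles (f.f (-1) - W.d (-1) 0 ≫ h) 0 (by simp) (uAux_d Y f h hh) ≫ Y.homologyπ (-1)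

lemma sigmaAux_add (f g : W ⟶ Y) (hf : W.X 0 ⟶ Y.X (-1)) (hhf : hf ≫ Y.d (-1) 0 = f.f 0)
    (hg : W.X 0 ⟶ Y.X (-1)) (hhg : hg ≫ Y.d (-1) 0 = g.f 0) :
    sigmaAux Y (f + g) (hf + hg)
        (by rw [Preadditive.add_comp, hhf, hhg]; rfl) =
      sigmaAux Y f hf hhf + sigmaAux Y g hg hhg := by
  have h1 : (f + g).f (-1) = f.f (-1) + g.f (-1) := rfl
  have hlift : Y.liftCycles ((f + g).f (-1) - W.d (-1) 0 ≫ (hf + hg)) 0 (by simp)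
      (uAux_d Y (f + g) (hf + hg) (by rw [Preadditive.add_comp, hhf, hhg]; rfl)) =
      Y.liftCycles (f.f (-1) - W.d (-1) 0 ≫ hf) 0 (by simp) (uAux_d Y f hf hhf) +
      Y.liftCycles (g.f (-1) - W.d (-1) 0 ≫ hg) 0 (by simp) (uAux_d Y g hg hhg) := by
    rw [← cancel_mono (Y.iCycles (-1))]
    simp only [Preadditive.add_comp, liftCycles_i, h1, Preadditive.comp_add]
    abel
  dsimp only [sigmaAux]
  rw [hlift, Preadditive.add_comp]

include hW in
lemma sigmaAux_sub_mem (f g : W ⟶ Y) (t : Homotopy f g)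
    (hf : W.X 0 ⟶ Y.X (-1)) (hhf : hf ≫ Y.d (-1) 0 = f.f 0)
    (hg : W.X 0 ⟶ Y.X (-1)) (hhg : hg ≫ Y.d (-1) 0 = g.f 0) :
    sigmaAux Y f hf hhf - sigmaAux Y g hg hhg ∈
      (deltaHom (W := W) (Y.homology (-1))).range := by
  have hc0 := t.comm 0
  rw [dNext_eq _ (show (ComplexShape.up ℤ).Rel 0 1 by simp),
    prevD_eq _ (show (ComplexShape.up ℤ).Rel (-1) 0 by simp),
    (hW 1 (by norm_num) (by norm_num)).eq_of_src (t.hom 1 0) 0, comp_zero, zero_add] at hc0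
  have hc1 := t.comm (-1)
  rw [dNext_eq _ (show (ComplexShape.up ℤ).Rel (-1) 0 by simp),
    prevD_eq _ (show (ComplexShape.up ℤ).Rel (-2) (-1) by simp)] at hc1
  have hs : (hf - hg - t.hom 0 (-1)) ≫ Y.d (-1) 0 = 0 := by
    simp only [Preadditive.sub_comp]
    rw [hhf, hhg, hc0]
    abel
  refine ⟨-(Y.liftCycles (hf - hg - t.hom 0 (-1)) 0 (by simp) hs ≫ Y.homologyπ (-1)), ?_⟩
  rw [deltaHom_apply, Preadditive.comp_neg, ← assoc, comp_liftCycles]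
  dsimp only [sigmaAux]
  have key : Y.liftCycles (f.f (-1) - W.d (-1) 0 ≫ hf) 0 (by simp) (uAux_d Y f hf hhf) =
      Y.liftCycles (g.f (-1) - W.d (-1) 0 ≫ hg) 0 (by simp) (uAux_d Y g hg hhg) +
      (t.hom (-1) (-2) ≫ Y.toCycles (-2) (-1) -
        Y.liftCycles (W.d (-1) 0 ≫ (hf - hg - t.hom 0 (-1))) 0 (by simp)
          (by rw [assoc, hs, comp_zero])) := by
    rw [← cancel_mono (Y.iCycles (-1))]
    simp only [Preadditive.add_comp, Preadditive.sub_comp, assoc, liftCycles_i, toCycles_i]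
    rw [hc1]
    simp only [Preadditive.comp_sub]
    abel
  rw [key]
  simp only [Preadditive.add_comp, Preadditive.sub_comp, assoc,
    toCycles_comp_homologyπ, comp_zero]
  abel

include hW in
lemma sigma_mk_eq (f g : W ⟶ Y) (t : Homotopy f g)
    (hf : W.X 0 ⟶ Y.X (-1)) (hhf : hf ≫ Y.d (-1) 0 = f.f 0)
    (hg : W.X 0 ⟶ Y.X (-1)) (hhg : hg ≫ Y.d (-1) 0 = g.f 0) :
    QuotientAddGroup.mk (s := (deltaHom (W := W) (Y.homology (-1))).range)
        (sigmaAux Y f hf hhf) =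
      QuotientAddGroup.mk (sigmaAux Y g hg hhg) := by
  rw [QuotientAddGroup.eq]
  have h2 : -sigmaAux Y f hf hhf + sigmaAux Y g hg hhg =
      -(sigmaAux Y f hf hhf - sigmaAux Y g hg hhg) := by abel
  rw [h2]
  exact neg_mem (sigmaAux_sub_mem hW Y f g t hf hhf hg hhg)

variable (hWp : ∀ i : ℤ, Projective (W.X i))

include hW hWp in
lemma rhoK_zero_exists_h (φ : Kq W ⟶ Kq Y) (hφ : rhoK hW Y φ = 0) :
    ∃ h : W.X 0 ⟶ Y.X (-1),
      h ≫ Y.d (-1) 0 = ((HomotopyCategory.quotient C _).preimage φ).f 0 := by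
  haveI := hWp 0
  have h0 : rhoAux hW Y ((HomotopyCategory.quotient C _).preimage φ) = 0 :=
    congrArg Subtype.val hφ
  rw [rhoAux] at h0
  obtain ⟨v, hv⟩ := exists_lift_of_homologyπ_comp_zero (Y := Y)
    (show (-1 : ℤ) + 1 = 0 by norm_num) _ h0
  exact ⟨v, by rw [← Y.toCycles_i (-1) 0, ← assoc, hv, liftCycles_i]⟩

/-- The underlying function of `Σ`. -/
def sigmaSet (φ : (rhoK hW Y).ker) :
    (W.X (-1) ⟶ Y.homology (-1)) ⧸ (deltaHom (W := W) (Y.homology (-1))).range :=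
  QuotientAddGroup.mk (sigmaAux Y ((HomotopyCategory.quotient C _).preimage φ.1)
    (rhoK_zero_exists_h hW Y hWp φ.1 φ.2).choose
    (rhoK_zero_exists_h hW Y hWp φ.1 φ.2).choose_spec)

/-- `Σ` as an additive map on the kernel of `ρ`. -/
def SigmaHom : (rhoK hW Y).ker →+
    ((W.X (-1) ⟶ Y.homology (-1)) ⧸ (deltaHom (W := W) (Y.homology (-1))).range) :=
  AddMonoidHom.mk' (sigmaSet hW Y hWp) (by
    intro φ ψ
    dsimp only [sigmaSet]
    have ht : Homotopy
        ((HomotopyCategory.quotient C _).preimage (φ + ψ).1)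
        ((HomotopyCategory.quotient C _).preimage φ.1 +
          (HomotopyCategory.quotient C _).preimage ψ.1) :=
      homotopyOfEq _ _ (by
        simp only [Functor.map_preimage, Functor.map_add, AddSubgroup.coe_add])
    rw [sigma_mk_eq hW Y _ _ ht _ _
      ((rhoK_zero_exists_h hW Y hWp φ.1 φ.2).choose +
        (rhoK_zero_exists_h hW Y hWp ψ.1 ψ.2).choose)
      (by rw [Preadditive.add_comp, (rhoK_zero_exists_h hW Y hWp φ.1 φ.2).choose_spec,
          (rhoK_zero_exists_h hW Y hWp ψ.1 ψ.2).choose_spec]; rfl)]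
    rw [sigmaAux_add]
    rfl)

include hW hWp in
lemma SigmaHom_injective : Function.Injective (SigmaHom hW Y hWp) := by
  rw [injective_iff_map_eq_zero]
  intro a ha
  dsimp only [SigmaHom, AddMonoidHom.mk', AddMonoidHom.coe_mk, ZeroHom.coe_mk, sigmaSet] at ha
  rw [QuotientAddGroup.eq_zero_iff] at ha
  obtain ⟨k, hk⟩ := ha
  rw [deltaHom_apply] at hk
  haveI := hWp 0
  haveI := hWp (-1)
  set f := (HomotopyCategory.quotient C _).preimage a.1 with hfdef
  set h := (rhoK_zero_exists_h hW Y hWp a.1 a.2).choose with hhdef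
  have hh : h ≫ Y.d (-1) 0 = f.f 0 := (rhoK_zero_exists_h hW Y hWp a.1 a.2).choose_spec
  let k' : W.X 0 ⟶ Y.cycles (-1) := Projective.factorThru k (Y.homologyπ (-1))
  have hk' : k' ≫ Y.homologyπ (-1) = k := Projective.factorThru_comp _ _
  have hzero : (Y.liftCycles (f.f (-1) - W.d (-1) 0 ≫ h) 0 (by simp) (uAux_d Y f h hh) -
      W.d (-1) 0 ≫ k') ≫ Y.homologyπ (-1) = 0 := by
    rw [Preadditive.sub_comp, assoc, hk', hk]
    exact sub_self _
  obtain ⟨v, hv⟩ := exists_lift_of_homologyπ_comp_zero (Y := Y)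
    (show (-2 : ℤ) + 1 = -1 by norm_num) _ hzero
  have hvd : v ≫ Y.d (-2) (-1) =
      (f.f (-1) - W.d (-1) 0 ≫ h) - W.d (-1) 0 ≫ (k' ≫ Y.iCycles (-1)) := by
    rw [← Y.toCycles_i (-2) (-1), ← assoc, hv]
    simp only [Preadditive.sub_comp, assoc, liftCycles_i]
  have ht : Homotopy f 0 := mkHomotopy hW f (h + k' ≫ Y.iCycles (-1)) v
    (by rw [Preadditive.add_comp, hh, assoc, Y.iCycles_d, comp_zero, add_zero])
    (by rw [hvd, Preadditive.comp_add]; abel)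
  have : a.1 = 0 := by
    conv_lhs => rw [← (HomotopyCategory.quotient C _).map_preimage a.1]
    rw [HomotopyCategory.eq_of_homotopy _ _ ht, Functor.map_zero]
  exact Subtype.ext this

include hW hWp in
lemma SigmaHom_surjective : Function.Surjective (SigmaHom hW Y hWp) := by
  intro q
  induction q using QuotientAddGroup.induction_on with
  | H g =>
    haveI := hWp (-1)
    let g' : W.X (-1) ⟶ Y.cycles (-1) := Projective.factorThru g (Y.homologyπ (-1))
    have hg' : g' ≫ Y.homologyπ (-1) = g := Projective.factorThru_comp _ _
    let f : W ⟶ Y := mkHom hW (g' ≫ Y.iCycles (-1)) 0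
      (by rw [assoc, Y.iCycles_d, comp_zero, comp_zero]) (by rw [zero_comp])
    have hf0 : f.f 0 = 0 := mkHom_f_zero hW _ _ _ _
    have hfm : f.f (-1) = g' ≫ Y.iCycles (-1) := mkHom_f_neg_one hW _ _ _ _
    have hm : rhoK hW Y ((HomotopyCategory.quotient C _).map f) = 0 := by
      rw [rhoK, descend_apply]
      refine Subtype.ext ?_
      change rhoAux hW Y f = 0
      dsimp only [rhoAux]
      have : Y.liftCycles (f.f 0) 1 (by simp) (f_zero_d hW Y f) = 0 := by
        rw [← cancel_mono (Y.iCycles 0), liftCycles_i, hf0, zero_comp]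
      rw [this, zero_comp]
    refine ⟨⟨(HomotopyCategory.quotient C _).map f, hm⟩, ?_⟩
    dsimp only [SigmaHom, AddMonoidHom.mk', AddMonoidHom.coe_mk, ZeroHom.coe_mk, sigmaSet]
    have ht : Homotopy ((HomotopyCategory.quotient C _).preimage
        ((HomotopyCategory.quotient C _).map f)) f :=
      homotopyOfEq _ _ (by rw [Functor.map_preimage])
    rw [sigma_mk_eq hW Y _ _ ht _ _ 0 (by rw [zero_comp, hf0])]
    have : sigmaAux Y f 0 (by rw [zero_comp, hf0]) = g := by
      dsimp only [sigmaAux]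
      rw [← hg']
      congr 1
      rw [← cancel_mono (Y.iCycles (-1)), liftCycles_i, hfm, comp_zero, sub_zero]
    rw [this]

end Sigma

section Theta

open HomotopyCategory

variable (hW : ∀ i : ℤ, i ≠ -1 → i ≠ 0 → IsZero (W.X i)) (M : C)

include hW in
lemma d_to_single_zero (g : W.X (-1) ⟶ M) :
    ∀ i, (ComplexShape.up ℤ).Rel i (-1) → W.d i (-1) ≫ g = 0 := by
  intro i hi
  simp only [ComplexShape.up_Rel] at hi
  obtain rfl : i = -2 := by omega
  exact (hW (-2) (by norm_num) (by norm_num)).eq_of_src _ _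

lemma ker_to_single_zero (g : (deltaHom (W := W) M).ker) :
    ∀ i, (ComplexShape.up ℤ).Rel i 0 → W.d i 0 ≫ g.1 = 0 := by
  intro i hi
  simp only [ComplexShape.up_Rel] at hi
  obtain rfl : i = -1 := by omega
  exact g.2

/-- Homotopy classes of maps to a single complex in degree 0. -/
def theta3 : (deltaHom (W := W) M).ker →+
    (Kq W ⟶ Kq ((HomologicalComplex.single C (ComplexShape.up ℤ) 0).obj M)) :=
  AddMonoidHom.mk' (fun g => (HomotopyCategory.quotient C _).map
      (mkHomToSingle g.1 (ker_to_single_zero M g)))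
    (fun g h => by
      have key : mkHomToSingle (g + h : (deltaHom (W := W) M).ker).1
            (ker_to_single_zero M (g + h)) =
          mkHomToSingle g.1 (ker_to_single_zero M g) +
            mkHomToSingle h.1 (ker_to_single_zero M h) := by
        refine HomologicalComplex.to_single_hom_ext ?_
        rw [HomologicalComplex.add_f_apply, mkHomToSingle_f, mkHomToSingle_f, mkHomToSingle_f]
        have hc : ((g + h : (deltaHom (W := W) M).ker) : W.X 0 ⟶ M) = g.1 + h.1 := rfl
        rw [hc, Preadditive.add_comp]
      rw [key, Functor.map_add])

include hW in
lemma theta3_bijective : Function.Bijective (theta3 (W := W) M) := by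
  constructor
  · rw [injective_iff_map_eq_zero]
    intro g hg
    dsimp only [theta3, AddMonoidHom.mk', AddMonoidHom.coe_mk, ZeroHom.coe_mk] at hg
    have ht : Homotopy (mkHomToSingle g.1 (ker_to_single_zero M g)) 0 :=
      HomotopyCategory.homotopyOfEq _ _ (by rw [hg, Functor.map_zero])
    have hc := ht.comm 0
    rw [dNext_eq _ (show (ComplexShape.up ℤ).Rel 0 1 by simp),
      prevD_eq _ (show (ComplexShape.up ℤ).Rel (-1) 0 by simp),
      (hW 1 (by norm_num) (by norm_num)).eq_of_src (ht.hom 1 0) 0, comp_zero] at hc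
    simp only [HomologicalComplex.single_obj_d, comp_zero, add_zero, zero_add,
      HomologicalComplex.zero_f_apply, mkHomToSingle_f] at hc
    refine Subtype.ext ?_
    rw [← cancel_mono (HomologicalComplex.singleObjXSelf (ComplexShape.up ℤ) 0 M).inv, hc]
    simp
  · intro ψ
    set f := (HomotopyCategory.quotient C _).preimage ψ with hf
    have hmem : W.d (-1) 0 ≫ (f.f 0 ≫ (HomologicalComplex.singleObjXSelf
        (ComplexShape.up ℤ) 0 M).hom) = 0 := by
      rw [← assoc, ← f.comm (-1) 0]
      simp
    refine ⟨⟨_, hmem⟩, ?_⟩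
    dsimp only [theta3, AddMonoidHom.mk', AddMonoidHom.coe_mk, ZeroHom.coe_mk]
    have key : mkHomToSingle (f.f 0 ≫ (HomologicalComplex.singleObjXSelf
          (ComplexShape.up ℤ) 0 M).hom) (ker_to_single_zero M ⟨_, hmem⟩) = f := by
      refine HomologicalComplex.to_single_hom_ext ?_
      rw [mkHomToSingle_f, assoc, Iso.hom_inv_id, comp_id]
    rw [key, Functor.map_preimage]

/-- Homotopy classes of maps to a single complex in degree `-1`. -/
def theta1 : (W.X (-1) ⟶ M) →+
    (Kq W ⟶ Kq ((HomologicalComplex.single C (ComplexShape.up ℤ) (-1)).obj M)) :=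
  AddMonoidHom.mk' (fun g => (HomotopyCategory.quotient C _).map
      (mkHomToSingle g (d_to_single_zero hW M g)))
    (fun g h => by
      have key : mkHomToSingle (g + h) (d_to_single_zero hW M (g + h)) =
          mkHomToSingle g (d_to_single_zero hW M g) +
            mkHomToSingle h (d_to_single_zero hW M h) := by
        refine HomologicalComplex.to_single_hom_ext ?_
        rw [HomologicalComplex.add_f_apply, mkHomToSingle_f, mkHomToSingle_f, mkHomToSingle_f,
          Preadditive.add_comp]
      rw [key, Functor.map_add])

include hW in
lemma theta1_surjective : Function.Surjective (theta1 hW M) := by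
  intro ψ
  set f := (HomotopyCategory.quotient C _).preimage ψ with hf
  refine ⟨f.f (-1) ≫ (HomologicalComplex.singleObjXSelf (ComplexShape.up ℤ) (-1) M).hom, ?_⟩
  dsimp only [theta1, AddMonoidHom.mk', AddMonoidHom.coe_mk, ZeroHom.coe_mk]
  have key : mkHomToSingle _ (d_to_single_zero hW M
      (f.f (-1) ≫ (HomologicalComplex.singleObjXSelf (ComplexShape.up ℤ) (-1) M).hom)) = f := by
    refine HomologicalComplex.to_single_hom_ext ?_
    rw [mkHomToSingle_f, assoc, Iso.hom_inv_id, comp_id]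
  rw [key, Functor.map_preimage]

include hW in
lemma theta1_ker : (theta1 hW M).ker = (deltaHom (W := W) M).range := by
  ext g
  constructor
  · intro hg
    replace hg : (HomotopyCategory.quotient C _).map
        (mkHomToSingle g (d_to_single_zero hW M g)) = 0 := hg
    have ht : Homotopy (mkHomToSingle g (d_to_single_zero hW M g)) 0 :=
      HomotopyCategory.homotopyOfEq _ _ (by rw [hg, Functor.map_zero])
    have hc := ht.comm (-1)
    rw [dNext_eq _ (show (ComplexShape.up ℤ).Rel (-1) 0 by simp),
      prevD_eq _ (show (ComplexShape.up ℤ).Rel (-2) (-1) by simp)] at hc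
    simp only [HomologicalComplex.single_obj_d, comp_zero, add_zero, zero_add,
      HomologicalComplex.zero_f_apply, mkHomToSingle_f] at hc
    refine ⟨ht.hom 0 (-1) ≫ (HomologicalComplex.singleObjXSelf
      (ComplexShape.up ℤ) (-1) M).hom, ?_⟩
    rw [deltaHom_apply, ← assoc, ← hc, assoc, Iso.inv_hom_id, comp_id]
  · rintro ⟨k, rfl⟩
    rw [AddMonoidHom.mem_ker]
    dsimp only [theta1, AddMonoidHom.mk', AddMonoidHom.coe_mk, ZeroHom.coe_mk]
    have ht : Homotopy (mkHomToSingle (deltaHom (W := W) M k)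
        (d_to_single_zero hW M _)) 0 := by
      refine mkHomotopy hW _ (k ≫ (HomologicalComplex.singleObjXSelf
        (ComplexShape.up ℤ) (-1) M).inv) 0 ?_ ?_
      · exact ((HomologicalComplex.isZero_single_obj_X (ComplexShape.up ℤ) (-1) M 0
          (by norm_num)).eq_of_tgt _ _)
      · rw [mkHomToSingle_f, deltaHom_apply]
        simp
    rw [HomotopyCategory.eq_of_homotopy _ _ ht, Functor.map_zero]

end Theta






section Assembly

open HomotopyCategory DerivedCategory

variable [HasDerivedCategory C]

/-- The single functor to the derived category is `Q` applied to single complexes. -/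
def singleQIso (m : ℤ) (M : C) :
    Q.obj ((HomologicalComplex.single C (ComplexShape.up ℤ) m).obj M) ≅
      (DerivedCategory.singleFunctor C m).obj M where
  hom := ((singleFunctorsPostcompQIso C).inv.hom m).app M
  inv := ((singleFunctorsPostcompQIso C).hom.hom m).app M
  hom_inv_id := by
    rw [DerivedCategory.singleFunctorsPostcompQIso_inv_hom,
      DerivedCategory.singleFunctorsPostcompQIso_hom_hom]
    simp only [NatTrans.id_app]
    exact (Category.id_comp _).trans rfl
  inv_hom_id := by
    rw [DerivedCategory.singleFunctorsPostcompQIso_inv_hom,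
      DerivedCategory.singleFunctorsPostcompQIso_hom_hom]
    simp only [NatTrans.id_app]
    exact (Category.id_comp _).trans rfl

variable (hW : ∀ i : ℤ, i ≠ -1 → i ≠ 0 → IsZero (W.X i))
  (hWp : ∀ i : ℤ, Projective (W.X i))

/-- Morphisms out of a two-term complex of projectives in the derived category are
computed in the homotopy category. -/
def PhiEquiv (Z : CochainComplex C ℤ) : (Kq W ⟶ Kq Z) ≃+ (Q.obj W ⟶ Q.obj Z) :=
  (homEquivQh hW hWp Z).trans
    (homAddEquiv ((quotientCompQhIso C).app W) ((quotientCompQhIso C).app Z))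

include hW hWp in
theorem main_general (X : CochainComplex C ℤ) (n : ℤ) :
    ∃ (ι : ((Q.obj W) ⟶
          (((DerivedCategory.singleFunctor C 0).obj (X.homology (n - 1)))⟦(1 : ℤ)⟧)) →+
        ((Q.obj W) ⟶ ((Q.obj X)⟦n⟧)))
      (ρ : ((Q.obj W) ⟶ ((Q.obj X)⟦n⟧)) →+
        ((Q.obj W) ⟶ ((DerivedCategory.singleFunctor C 0).obj (X.homology n)))),
    Function.Injective ι ∧ Function.Surjective ρ ∧ Function.Exact ι ρ := by
  classical
  set Y : CochainComplex C ℤ := (CategoryTheory.shiftFunctor (CochainComplex C ℤ) n).obj X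
    with hY
  set A := Y.homology (-1) with hA
  set B := Y.homology 0 with hB
  set M₁ := X.homology (n - 1) with hM₁
  set M₃ := X.homology n with hM₃
  let αA : A ≅ M₁ := ((HomologicalComplex.homologyFunctor C
    (ComplexShape.up ℤ) 0).shiftIso n (-1) (n - 1) (by omega)).app X
  let αB : B ≅ M₃ := ((HomologicalComplex.homologyFunctor C
    (ComplexShape.up ℤ) 0).shiftIso n 0 n (by omega)).app X
  -- the middle group
  let e2 : (Kq W ⟶ Kq Y) ≃+ ((Q.obj W) ⟶ ((Q.obj X)⟦n⟧)) :=
    (PhiEquiv hW hWp Y).trans (homAddEquiv (Iso.refl _) ((Q.commShiftIso n).app X))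
  -- the ρ-side group
  let E3 : (deltaHom (W := W) B).ker ≃+
      ((Q.obj W) ⟶ ((DerivedCategory.singleFunctor C 0).obj M₃)) :=
    (AddEquiv.ofBijective (theta3 (W := W) B) (theta3_bijective hW B)).trans
      ((homAddEquiv (Iso.refl _) ((HomotopyCategory.quotient C _).mapIso
          ((HomologicalComplex.single C (ComplexShape.up ℤ) 0).mapIso αB))).trans
        ((PhiEquiv hW hWp _).trans (homAddEquiv (Iso.refl _) (singleQIso 0 M₃))))
  -- the ι-side group
  let E1 : ((W.X (-1) ⟶ A) ⧸ (deltaHom (W := W) A).range) ≃+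
      (Kq W ⟶ Kq ((HomologicalComplex.single C (ComplexShape.up ℤ) (-1)).obj A)) :=
    (QuotientAddGroup.quotientAddEquivOfEq (theta1_ker hW A).symm).trans
      (QuotientAddGroup.quotientKerEquivOfSurjective _ (theta1_surjective hW A))
  let βsingle : (((DerivedCategory.singleFunctor C 0).obj M₁)⟦(1 : ℤ)⟧) ≅
      (DerivedCategory.singleFunctor C (-1)).obj M₁ :=
    ((DerivedCategory.singleFunctors C).shiftIso 1 (-1) 0 (by omega)).app M₁
  let SigmaEquiv : ((rhoK hW Y).ker) ≃+
      ((W.X (-1) ⟶ A) ⧸ (deltaHom (W := W) A).range) :=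
    AddEquiv.ofBijective (SigmaHom hW Y hWp)
      ⟨SigmaHom_injective hW Y hWp, SigmaHom_surjective hW Y hWp⟩
  let F : ((Q.obj W) ⟶ (((DerivedCategory.singleFunctor C 0).obj M₁)⟦(1 : ℤ)⟧)) ≃+
      ((rhoK hW Y).ker) :=
    (((homAddEquiv (Iso.refl (Q.obj W)) (βsingle ≪≫ (singleQIso (-1) M₁).symm)).trans
      ((PhiEquiv hW hWp _).symm)).trans
      ((homAddEquiv (Iso.refl _) ((HomotopyCategory.quotient C _).mapIso
          ((HomologicalComplex.single C (ComplexShape.up ℤ) (-1)).mapIso αA.symm))).trans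
        (E1.symm.trans SigmaEquiv.symm)))
  refine ⟨e2.toAddMonoidHom.comp (((rhoK hW Y).ker.subtype).comp F.toAddMonoidHom),
    E3.toAddMonoidHom.comp ((rhoK hW Y).comp e2.symm.toAddMonoidHom), ?_, ?_, ?_⟩
  · intro a b hab
    apply F.injective
    apply Subtype.ext
    exact e2.injective hab
  · intro z
    obtain ⟨x, hx⟩ := rhoK_surjective hW Y hWp (E3.symm z)
    exact ⟨e2 x, by simp [hx]⟩
  · intro y
    constructor
    · intro hy
      have h0 : rhoK hW Y (e2.symm y) = 0 := by
        have := congrArg E3.symm hy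
        simpa using this
      refine ⟨F.symm ⟨e2.symm y, h0⟩, ?_⟩
      simp
    · rintro ⟨a, rfl⟩
      have h1 : rhoK hW Y (e2.symm (e2 ((F a) : Kq W ⟶ Kq Y))) = 0 := by
        rw [e2.symm_apply_apply]
        exact (F a).2
      simp only [AddMonoidHom.comp_apply, AddEquiv.coe_toAddMonoidHom,
        AddSubgroup.coe_subtype, e2.symm_apply_apply]
      rw [AddMonoidHom.mem_ker.mp (F a).2, map_zero]

end Assembly

end

end Stmt12Aux




open CategoryTheory CategoryTheory.Limits

universe w u

/-- Let `R` be a ring and `W` a cochain complex of projective left `R`-modules with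
`Wⁿ = 0` for `n ∉ {-1, 0}`.  Then for every cochain complex `X` of `R`-modules and every
integer `n` there is a short exact sequence of abelian groups
`0 → Hom_{D(R)}(W, H^{n-1}(X)[1]) → Hom_{D(R)}(W, X[n]) → Hom_{D(R)}(W, Hⁿ(X)) → 0`. -/
theorem stmt_12 {R : Type u} [Ring R] [HasDerivedCategory.{w} (ModuleCat.{u} R)]
    (W : CochainComplex (ModuleCat.{u} R) ℤ)
    (hproj : ∀ n : ℤ, Projective (W.X n))
    (hzero : ∀ n : ℤ, n ≠ -1 → n ≠ 0 → IsZero (W.X n))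
    (X : CochainComplex (ModuleCat.{u} R) ℤ) (n : ℤ) :
    ∃ (ι : ((DerivedCategory.Q.obj W) ⟶
          (((DerivedCategory.singleFunctor (ModuleCat.{u} R) 0).obj
            (X.homology (n - 1)))⟦(1 : ℤ)⟧)) →+
        ((DerivedCategory.Q.obj W) ⟶ ((DerivedCategory.Q.obj X)⟦n⟧)))
      (ρ : ((DerivedCategory.Q.obj W) ⟶ ((DerivedCategory.Q.obj X)⟦n⟧)) →+
        ((DerivedCategory.Q.obj W) ⟶
          ((DerivedCategory.singleFunctor (ModuleCat.{u} R) 0).obj (X.homology n)))),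
    Function.Injective ι ∧ Function.Surjective ρ ∧ Function.Exact ι ρ := by
  exact Stmt12Aux.main_general (W := W) hzero hproj X n
end

section
/- Assume moreover that Tor₁^R(S, S) = 0. Then the ring homomorphism λ' : S' → S ⊗_R S' sending f to 1 ⊗ f is a ring epimorphism, i.e. for every ring T and every pair of ring homomorphisms g₁, g₂ : S ⊗_R S' → T with g₁ ∘ λ' = g₂ ∘ λ' one has g₁ = g₂. -/
open CategoryTheory TensorProduct

universe u

/-- Let `λ = algebraMap R S` be an injective ring epimorphism between commutative rings
with `Tor₁^R(S, S) = 0`.  Write `S/R` for the quotient `R`-module `S ⧸ λ(R)` and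
`S' = End_R(S/R)`.  Then the ring homomorphism `λ' : S' → S ⊗_R S'`, `f ↦ 1 ⊗ f`,
is a ring epimorphism: any two ring homomorphisms out of `S ⊗_R S'` agreeing after
composition with `λ'` are equal. -/
theorem stmt_16 {R S : Type u} [CommRing R] [CommRing S] [Algebra R S]
    (hinj : Function.Injective (algebraMap R S))
    (hepi : ∀ (T : Type u) [Ring T] (g₁ g₂ : S →+* T),
      g₁.comp (algebraMap R S) = g₂.comp (algebraMap R S) → g₁ = g₂)
    (htor : Limits.IsZero
      (((Tor (ModuleCat.{u} R) 1).obj (ModuleCat.of R S)).obj (ModuleCat.of R S))) :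
    ∀ (T : Type u) [Ring T]
      (g₁ g₂ : (S ⊗[R] Module.End R (S ⧸ LinearMap.range (Algebra.linearMap R S))) →+* T),
      g₁.comp (Algebra.TensorProduct.includeRight :
          Module.End R (S ⧸ LinearMap.range (Algebra.linearMap R S)) →ₐ[R]
            S ⊗[R] Module.End R (S ⧸ LinearMap.range (Algebra.linearMap R S))).toRingHom
        = g₂.comp (Algebra.TensorProduct.includeRight :
          Module.End R (S ⧸ LinearMap.range (Algebra.linearMap R S)) →ₐ[R]
            S ⊗[R] Module.End R (S ⧸ LinearMap.range (Algebra.linearMap R S))).toRingHom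
      → g₁ = g₂ := by
  intro T _ g₁ g₂ h
  set S' := Module.End R (S ⧸ LinearMap.range (Algebra.linearMap R S))
  have hright : ∀ f : S', g₁ (1 ⊗ₜ f) = g₂ (1 ⊗ₜ f) := fun f =>
    congrArg (fun g : S' →+* T => g f) h
  -- the composites with the left inclusion agree after `algebraMap R S`
  have hleft : g₁.comp (Algebra.TensorProduct.includeLeftRingHom (R := R) (A := S) (B := S'))
      = g₂.comp (Algebra.TensorProduct.includeLeftRingHom (R := R) (A := S) (B := S')) := by
    apply hepi
    ext r
    have key : (algebraMap R S r) ⊗ₜ[R] (1 : S') = 1 ⊗ₜ[R] (algebraMap R S' r) := by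
      rw [Algebra.algebraMap_eq_smul_one, Algebra.algebraMap_eq_smul_one,
        smul_tmul]
    simp only [RingHom.comp_apply, Algebra.TensorProduct.includeLeftRingHom_apply, key]
    exact hright _
  have hleft' : ∀ s : S, g₁ (s ⊗ₜ (1 : S')) = g₂ (s ⊗ₜ (1 : S')) := fun s =>
    congrArg (fun g : S →+* T => g s) hleft
  refine RingHom.ext fun x => ?_
  induction x using TensorProduct.induction_on with
  | zero => simp
  | tmul s f =>
    have : (s ⊗ₜ[R] f : S ⊗[R] S') = (s ⊗ₜ 1) * (1 ⊗ₜ f) := by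
      rw [Algebra.TensorProduct.tmul_mul_tmul, mul_one, one_mul]
    rw [this, map_mul, map_mul, hleft' s, hright f]
  | add x y hx hy => rw [map_add, map_add, hx, hy]
end
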